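/- Let δ ≥ 2, r ≥ 1, and suppose n = a(r+δ−1) for a positive integer a and r < k ≤ n − a(δ−1). Then for every prime power q > (rδ)^{r·4^r} · C(n + (rδ)^{(r−1)·4^r}, k−1), there exists an optimal linear LRC over F_q with parameters (n, k, d, r, δ), i.e., one with minimum distance d = n − k − (⌈k/r⌉ − 1)(δ−1) + 1. -/

import Mathlib

set_option maxHeartbeats 1600000
namespace LRC7
open Polynomial




lemma le_choose (N j : ℕ) (h1 : 1 ≤ j) (h2 : j ≤ N - 1) : N ≤ N.choose j := by
  induction N with
  | zero => omega
  | succ N ih =>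
    obtain ⟨jj, rfl⟩ : ∃ jj, j = jj + 1 := ⟨j - 1, by omega⟩
    rw [Nat.choose_succ_succ']
    rcases Nat.lt_or_ge (jj+1) N with hj | hj
    · have hih := ih (by omega)
      have hpos : 0 < N.choose jj := Nat.choose_pos (by omega)
      omega
    · have hjN : jj + 1 = N := by omega
      subst hjN
      rw [Nat.choose_self, Nat.choose_succ_self_right]

lemma two_choose_le (n j : ℕ) (h : 3 * j + 2 ≤ n) :
    2 * n.choose j ≤ n.choose (j+1) := by
  have key : n.choose (j+1) * (j+1) = n.choose j * (n - j) := Nat.choose_succ_right_eq n j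
  have h2 : 2 * (j+1) ≤ n - j := by omega
  have h3 : 2 * n.choose j * (j + 1) ≤ n.choose j * (n - j) := by
    calc 2 * n.choose j * (j+1) = n.choose j * (2 * (j+1)) := by ring
    _ ≤ n.choose j * (n - j) := Nat.mul_le_mul_left _ h2
  rw [← key] at h3
  have hj1 : 0 < j + 1 := by omega
  have h4 : 2 * n.choose j * (j+1) ≤ n.choose (j+1) * (j+1) := h3
  exact Nat.le_of_mul_le_mul_right h4 hj1

lemma sum_choose_le (n t : ℕ) (h : 3 * t ≤ n) :
    ∑ j ∈ Finset.range (t+1), n.choose j ≤ 2 * n.choose t := by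
  induction t with
  | zero => simp
  | succ t ih =>
    rw [Finset.sum_range_succ]
    have h1 : 3 * t ≤ n := by omega
    have h2 : 2 * n.choose t ≤ n.choose (t+1) := two_choose_le n t (by omega)
    have h3 := ih h1
    omega

lemma pow_sub_le (q c mexp : ℕ) (hc : c ≤ q) :
    q ^ mexp ≤ (q - c)^mexp + mexp * c * q^(mexp - 1) := by
  induction mexp with
  | zero => simp
  | succ mexp ih =>
    have h2 : q^mexp * q ≤ ((q-c)^mexp + mexp * c * q^(mexp-1)) * q :=
      Nat.mul_le_mul_right _ ih
    have h5 : (q-c)^mexp * q = (q-c)^mexp * (q - c) + (q-c)^mexp * c := by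
      rw [← Nat.mul_add]
      congr 1
      omega
    have h6 : (q-c)^mexp * c ≤ q^mexp * c :=
      Nat.mul_le_mul_right _ (Nat.pow_le_pow_left (by omega) _)
    have h7 : mexp * c * q^(mexp-1) * q ≤ mexp * c * q^mexp := by
      rcases Nat.eq_zero_or_pos mexp with h | h
      · simp [h]
      · have : q^(mexp-1) * q = q^mexp := by
          rw [← pow_succ]
          congr 1
          omega
        have heq : mexp * c * q^(mexp-1) * q = mexp * c * q^mexp := by
          rw [mul_assoc, this]
        exact heq.le
    calc q^(mexp+1) = q^mexp * q := by ring
    _ ≤ ((q-c)^mexp + mexp * c * q^(mexp-1)) * q := h2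
    _ = (q-c)^mexp * q + mexp * c * q^(mexp-1) * q := by ring
    _ ≤ ((q-c)^(mexp+1) + q^mexp * c) + mexp * c * q^mexp := by
        rw [h5]
        have : (q-c)^mexp * (q-c) = (q-c)^(mexp+1) := by ring
        omega
    _ = (q-c)^(mexp+1) + (mexp+1) * c * q^(mexp+1-1) := by
        simp only [Nat.add_sub_cancel]
        ring

lemma descFactorial_ge (q df : ℕ) (hdf : 1 ≤ df) (hq : df ≤ q) :
    q * (q - df)^(df - 1) ≤ q.descFactorial df := by
  obtain ⟨d, rfl⟩ : ∃ d, df = d + 1 := ⟨df - 1, by omega⟩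
  rw [Nat.descFactorial_eq_prod_range]
  rw [Finset.prod_range_succ']
  simp only [Nat.sub_zero, Nat.add_sub_cancel]
  have h1 : (q - (d+1))^d ≤ ∏ i ∈ Finset.range d, (q - (i+1)) := by
    have hc : (q - (d+1))^d = ∏ _i ∈ Finset.range d, (q - (d+1)) := by
      rw [Finset.prod_const, Finset.card_range]
    rw [hc]
    apply Finset.prod_le_prod
    · intro i _; omega
    · intro i hi
      simp only [Finset.mem_range] at hi
      omega
  calc q * (q - (d+1))^(d+1-1) = (q - (d+1))^d * q := by
        simp only [Nat.add_sub_cancel]; ring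
  _ ≤ (∏ i ∈ Finset.range d, (q - (i+1))) * q := Nat.mul_le_mul_right _ h1

lemma choose_lower (q df : ℕ) (hdf : 2 ≤ df) (hq : 2 * df * df ≤ q) :
    q ^ df ≤ 2 * (df.factorial * q.choose df) := by
  have hfc : df.factorial * q.choose df = q.descFactorial df := by
    rw [Nat.descFactorial_eq_factorial_mul_choose q df]
  rw [hfc]
  have hdq : df ≤ q := by nlinarith
  have h1 := descFactorial_ge q df (by omega) hdq
  have h2 := pow_sub_le q df (df - 1) hdq
  -- 2*(q-df)^(df-1) ≥ q^(df-1)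
  have h3 : (df - 1) * df * q^(df-1-1) * 2 ≤ q ^ (df - 1) := by
    have e1 : (df-1) * df * 2 ≤ q := by
      calc (df-1)*df*2 ≤ df*df*2 := by gcongr <;> omega
      _ = 2*df*df := by ring
      _ ≤ q := hq
    have e2 : q ^ (df - 1) = q * q^(df-1-1) := by
      rw [← pow_succ']
      congr 1
      omega
    calc (df-1)*df*q^(df-1-1)*2 = ((df-1)*df*2) * q^(df-1-1) := by ring
    _ ≤ q * q^(df-1-1) := Nat.mul_le_mul_right _ e1
    _ = q ^ (df-1) := e2.symm
  have h4 : q ^ (df - 1) ≤ 2 * (q - df)^(df-1) := by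
    have := pow_sub_le q df (df-1) hdq
    omega
  have h5 : q ^ df = q * q ^ (df - 1) := by
    rw [← pow_succ']
    congr 1
    omega
  calc q ^ df = q * q^(df-1) := h5
  _ ≤ q * (2 * (q - df)^(df-1)) := Nat.mul_le_mul_left _ h4
  _ = 2 * (q * (q - df)^(df-1)) := by ring
  _ ≤ 2 * q.descFactorial df := Nat.mul_le_mul_left _ h1








section PS
variable {F : Type} [Field F]

noncomputable def pS (S : Finset F) : Polynomial F := ∏ α ∈ S, (X - C α)

lemma pS_monic (S : Finset F) : (pS S).Monic :=
  monic_prod_of_monic _ _ (fun α _ => monic_X_sub_C α)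

lemma pS_natDegree (S : Finset F) : (pS S).natDegree = S.card := by
  rw [pS, natDegree_prod]
  · simp [natDegree_X_sub_C]
  · intro α _
    exact X_sub_C_ne_zero α

lemma pS_eval_eq_zero_iff (S : Finset F) (α : F) : (pS S).eval α = 0 ↔ α ∈ S := by
  rw [pS, eval_prod, Finset.prod_eq_zero_iff]
  constructor
  · rintro ⟨β, hβ, h⟩
    simp only [eval_sub, eval_X, eval_C, sub_eq_zero] at h
    rwa [h]
  · intro h
    exact ⟨α, h, by simp⟩

lemma pS_inj : Function.Injective (pS (F := F)) := by
  intro S S' h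
  ext α
  rw [← pS_eval_eq_zero_iff, ← pS_eval_eq_zero_iff, h]

end PS

variable {F : Type} [Field F] [Fintype F] [DecidableEq F]

lemma good_poly (df a : ℕ) (hdf : 2 ≤ df) (ha : 1 ≤ a)
    (hcard : a * (Fintype.card F)^(df-1) < (Fintype.card F).choose df) :
    ∃ (f : Polynomial F) (c : Fin a → F) (A : Fin a → Finset F),
      f.Monic ∧ f.natDegree = df ∧ Function.Injective c ∧
      (∀ i, (A i).card = df) ∧
      (∀ i (α : F), α ∈ A i ↔ f.eval α = c i) := by
  classical
  set q := Fintype.card F with hqdef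
  set s : Finset (Finset F) := (Finset.univ : Finset F).powersetCard df with hsdef
  have hscard : s.card = q.choose df := by
    rw [hsdef, Finset.card_powersetCard, Finset.card_univ]
  set keymap : Finset F → (Fin (df-1) → F) := fun S => fun i => (pS S).coeff (i.val+1)
    with hkeydef
  have hmaps : ∀ S ∈ s, keymap S ∈ (Finset.univ : Finset (Fin (df-1) → F)) :=
    fun _ _ => Finset.mem_univ _
  have htcard : (Finset.univ : Finset (Fin (df-1) → F)).card = q^(df-1) := by
    rw [Finset.card_univ, Fintype.card_fun]
    simp [hqdef]
  have hmul : (Finset.univ : Finset (Fin (df-1) → F)).card * a ≤ s.card := by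
    rw [htcard, hscard]
    calc q^(df-1) * a = a * q^(df-1) := by ring
    _ ≤ q.choose df := le_of_lt hcard
  obtain ⟨key, -, hkey⟩ :=
    Finset.exists_le_card_fiber_of_mul_le_card_of_maps_to hmaps
      ⟨keymap ∅, Finset.mem_univ _⟩ hmul
  set fib : Finset (Finset F) := s.filter (fun S => keymap S = key) with hfibdef
  have hfibcard : a ≤ fib.card := hkey
  -- all members of fib have card df
  have hmemcard : ∀ S ∈ fib, S.card = df := by
    intro S hS
    rw [hfibdef, Finset.mem_filter, hsdef, Finset.mem_powersetCard] at hS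
    exact hS.1.2
  obtain ⟨S₀, hS₀⟩ : ∃ S₀, S₀ ∈ fib := by
    have : 0 < fib.card := by omega
    exact Finset.card_pos.mp this
  set f : Polynomial F := pS S₀ with hfdef
  -- every member of fib differs from f by a constant
  have hdiff : ∀ S ∈ fib, pS S = f + C ((pS S).coeff 0 - f.coeff 0) := by
    intro S hS
    have hkeyS : keymap S = key := (Finset.mem_filter.mp hS).2
    have hkeyS₀ : keymap S₀ = key := (Finset.mem_filter.mp hS₀).2
    have hcS : S.card = df := hmemcard S hS
    have hcS₀ : S₀.card = df := hmemcard S₀ hS₀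
    have hdegS : (pS S).natDegree = df := by rw [pS_natDegree, hcS]
    have hdegS₀ : f.natDegree = df := by rw [hfdef, pS_natDegree, hcS₀]
    have hco : ∀ j, 1 ≤ j → (pS S).coeff j = f.coeff j := by
      intro j hj
      rcases Nat.lt_or_ge j df with hjd | hjd
      · have hj1 : j - 1 < df - 1 := by omega
        have := congrFun (hkeyS.trans hkeyS₀.symm) ⟨j-1, hj1⟩
        simpa only [hkeydef, Nat.sub_add_cancel hj] using this
      · rcases Nat.eq_or_lt_of_le hjd with hjd | hjd
        · have hjd' : j = df := hjd.symm
          subst hjd'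
          have e1 : (pS S).coeff j = 1 := by
            rw [← hdegS]; exact (pS_monic S).coeff_natDegree
          have e2 : f.coeff j = 1 := by
            rw [← hdegS₀]; exact (pS_monic S₀).coeff_natDegree
          rw [e1, e2]
        · rw [coeff_eq_zero_of_natDegree_lt (by omega),
            coeff_eq_zero_of_natDegree_lt (by omega)]
    have hconst : pS S - f = C ((pS S - f).coeff 0) := by
      apply Polynomial.eq_C_of_natDegree_le_zero
      rw [Polynomial.natDegree_le_iff_coeff_eq_zero]
      intro j hj
      rw [coeff_sub, hco j (by omega), sub_self]
    have h2 : pS S - f + f = C ((pS S - f).coeff 0) + f := by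
      conv_lhs => rw [hconst]
    simpa [sub_add_cancel, coeff_sub, add_comm] using h2
  -- choose a distinct members
  obtain ⟨fs, hfs_sub, hfs_card⟩ := Finset.exists_subset_card_eq hfibcard
  have hfs : ∃ e : Fin a → Finset F, Function.Injective e ∧ ∀ i, e i ∈ fib := by
    have : Nonempty (Fin a ≃ {x // x ∈ fs}) := by
      apply Fintype.card_eq.mp
      simp [hfs_card]
    obtain ⟨eq⟩ := this
    refine ⟨fun i => (eq i : Finset F), ?_, ?_⟩
    · intro i j hij
      apply eq.injective
      exact Subtype.ext hij
    · intro i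
      exact hfs_sub (eq i).2
  obtain ⟨e, he_inj, he_mem⟩ := hfs
  refine ⟨f, fun i => -((pS (e i)).coeff 0 - f.coeff 0), e, ?_, ?_, ?_, ?_, ?_⟩
  · exact pS_monic S₀
  · rw [hfdef, pS_natDegree, hmemcard S₀ hS₀]
  · intro i j hij
    simp only [neg_inj, sub_left_inj] at hij
    apply he_inj
    apply pS_inj
    rw [hdiff (e i) (he_mem i), hdiff (e j) (he_mem j), hij]
  · intro i
    exact hmemcard (e i) (he_mem i)
  · intro i α
    have h1 := pS_eval_eq_zero_iff (e i) α
    rw [hdiff (e i) (he_mem i)] at h1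
    simp only [eval_add, eval_C] at h1
    constructor
    · intro h
      have := h1.mpr h
      linear_combination this
    · intro h
      apply h1.mp
      rw [h]
      ring







variable {F : Type} [Field F] {k : ℕ}

lemma finrank_inf_ker_lt {M : Submodule F (Fin k → F)} {φ : (Fin k → F) →ₗ[F] F}
    (w : Fin k → F) (hw : w ∈ M) (hφ : φ w ≠ 0) :
    Module.finrank F ↥(M ⊓ LinearMap.ker φ) < Module.finrank F ↥M := by
  apply Submodule.finrank_lt_finrank_of_lt
  apply lt_of_le_of_ne inf_le_left
  intro h
  rw [← h] at hw
  exact hφ ((Submodule.mem_inf.mp hw).2)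

lemma finrank_pos_of_ne_bot {M : Submodule F (Fin k → F)} (w : Fin k → F)
    (hw : w ∈ M) (hw0 : w ≠ 0) : 1 ≤ Module.finrank F ↥M := by
  have hlt : (⊥ : Submodule F (Fin k → F)) < M := by
    apply lt_of_le_of_ne bot_le
    intro h
    rw [← h] at hw
    exact hw0 hw
  have h2 := Submodule.finrank_lt_finrank_of_lt hlt
  have h3 : Module.finrank F ↥(⊥ : Submodule F (Fin k → F)) = 0 := finrank_bot F _
  omega

lemma kernel_reduce {ι' : Type} [DecidableEq ι'] (φ : ι' → ((Fin k → F) →ₗ[F] F))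
    (fam : Finset ι') :
    ∃ s ⊆ fam, (⨅ e ∈ s, LinearMap.ker (φ e)) = (⨅ e ∈ fam, LinearMap.ker (φ e)) ∧
      s.card + Module.finrank F ↥(⨅ e ∈ fam, LinearMap.ker (φ e)) ≤ k := by
  classical
  induction fam using Finset.induction with
  | empty =>
    have h0 : (⨅ e ∈ (∅ : Finset ι'), LinearMap.ker (φ e)) = ⊤ := by simp
    refine ⟨∅, Finset.Subset.refl _, rfl, ?_⟩
    rw [h0]
    have htop : Module.finrank F ↥(⊤ : Submodule F (Fin k → F)) = k := by
      rw [finrank_top, Module.finrank_pi]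
      simp
    simp [htop]
  | insert _ _ hc ih =>
    rename_i c fam'
    obtain ⟨s, hs_sub, hs_eq, hs_card⟩ := ih
    have hins : (⨅ e ∈ insert c fam', LinearMap.ker (φ e))
        = LinearMap.ker (φ c) ⊓ ⨅ e ∈ fam', LinearMap.ker (φ e) :=
      Finset.iInf_insert _ _ _
    by_cases hle : (⨅ e ∈ fam', LinearMap.ker (φ e)) ≤ LinearMap.ker (φ c)
    · refine ⟨s, hs_sub.trans (Finset.subset_insert _ _), ?_, ?_⟩
      · rw [hs_eq, hins, inf_eq_right.mpr hle]
      · rw [hins, inf_eq_right.mpr hle]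
        exact hs_card
    · refine ⟨insert c s, Finset.insert_subset_insert _ hs_sub, ?_, ?_⟩
      · have : (⨅ e ∈ insert c s, LinearMap.ker (φ e))
            = LinearMap.ker (φ c) ⊓ ⨅ e ∈ s, LinearMap.ker (φ e) :=
          Finset.iInf_insert _ _ _
        rw [this, hs_eq, hins]
      · have hlt : Module.finrank F ↥(⨅ e ∈ insert c fam', LinearMap.ker (φ e))
            < Module.finrank F ↥(⨅ e ∈ fam', LinearMap.ker (φ e)) := by
          rw [hins]
          apply Submodule.finrank_lt_finrank_of_lt
          apply lt_of_le_of_ne inf_le_right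
          intro h
          apply hle
          rw [← h]
          exact inf_le_left
        have hcs : c ∉ s := fun h => hc (hs_sub h)
        rw [Finset.card_insert_of_notMem hcs]
        omega

lemma finrank_le_card_of_inj {W : Submodule F (Fin k → F)} (T : Finset (Fin k))
    [DecidableEq (Fin k)]
    (h : ∀ v ∈ W, (∀ idx ∈ T, v idx = 0) → v = 0) :
    Module.finrank F ↥W ≤ T.card := by
  classical
  let res : (Fin k → F) →ₗ[F] ({x // x ∈ T} → F) :=
    LinearMap.funLeft F F (fun x => (x : Fin k))
  have hinj : Function.Injective (res.comp W.subtype) := by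
    intro ⟨v, hv⟩ ⟨w, hw⟩ hvw
    ext1
    have hsub : v - w ∈ W := W.sub_mem hv hw
    have : v - w = 0 := by
      apply h _ hsub
      intro idx hidx
      have := congrFun hvw ⟨idx, hidx⟩
      simp only [res, LinearMap.comp_apply, LinearMap.funLeft_apply,
        Submodule.subtype_apply] at this
      simp [Pi.sub_apply, this, sub_eq_zero]
    rwa [sub_eq_zero] at this
  have := LinearMap.finrank_le_finrank_of_injective hinj
  rwa [Module.finrank_pi, Fintype.card_coe] at this








variable {F : Type} [Field F] [DecidableEq F]

/-- degree of the basis monomial `X^(idx % r) * f^(idx / r)`. -/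
def degIdx (r df idx : ℕ) : ℕ := idx + (idx / r) * (df - r)

lemma degIdx_eq (r df idx : ℕ) (hr : 1 ≤ r) (hrdf : r ≤ df) :
    degIdx r df idx = (idx / r) * df + idx % r := by
  have h := Nat.div_add_mod idx r
  have h2 : idx / r * (df - r) + idx / r * r = idx / r * df := by
    rw [← Nat.mul_add]
    congr 1
    omega
  have h3 : idx / r * r = r * (idx / r) := Nat.mul_comm _ _
  unfold degIdx
  omega

lemma degIdx_strictMono (r df : ℕ) (hr : 1 ≤ r) {idx idx' : ℕ} (h : idx < idx') :
    degIdx r df idx < degIdx r df idx' := by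
  have : idx / r ≤ idx' / r := Nat.div_le_div_right (le_of_lt h)
  unfold degIdx
  have := Nat.mul_le_mul_right (df - r) this
  omega

lemma degIdx_le (r df idx mM : ℕ) (hr : 1 ≤ r) (hidx : idx / r ≤ mM - 1) :
    degIdx r df idx ≤ idx + (mM - 1) * (df - r) := by
  unfold degIdx
  have := Nat.mul_le_mul_right (df - r) hidx
  omega

variable (r : ℕ) {k : ℕ}

noncomputable def locpoly (y : F) (v : Fin k → F) : F[X] :=
  ∑ idx : Fin k, Polynomial.C (v idx * y ^ (idx.val / r)) * X ^ (idx.val % r)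

noncomputable def globpoly (f : F[X]) (v : Fin k → F) : F[X] :=
  ∑ idx : Fin k, Polynomial.C (v idx) * X ^ (idx.val % r) * f ^ (idx.val / r)

lemma locpoly_natDegree_le (y : F) (v : Fin k → F) (hr : 1 ≤ r) :
    (locpoly r y v).natDegree ≤ r - 1 := by
  apply Polynomial.natDegree_sum_le_of_forall_le
  intro idx _
  calc (Polynomial.C (v idx * y ^ (idx.val / r)) * X ^ (idx.val % r)).natDegree
      ≤ (Polynomial.C (v idx * y ^ (idx.val / r))).natDegree + (X ^ (idx.val % r) : F[X]).natDegree :=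
        natDegree_mul_le
  _ ≤ 0 + (idx.val % r) := by
      apply Nat.add_le_add
      · exact le_of_eq (natDegree_C _)
      · exact natDegree_X_pow_le _
  _ ≤ r - 1 := by
      have := Nat.mod_lt idx.val (show 0 < r by omega)
      omega

lemma locpoly_eval (y x : F) (v : Fin k → F) :
    (locpoly r y v).eval x = ∑ idx : Fin k, v idx * y ^ (idx.val / r) * x ^ (idx.val % r) := by
  rw [locpoly, eval_finset_sum]
  apply Finset.sum_congr rfl
  intro idx _
  simp [eval_mul, eval_pow]

lemma locpoly_sub (y : F) (v w : Fin k → F) :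
    locpoly r y (v - w) = locpoly r y v - locpoly r y w := by
  rw [locpoly, locpoly, locpoly, ← Finset.sum_sub_distrib]
  apply Finset.sum_congr rfl
  intro idx _
  rw [← sub_mul, ← C_sub]
  congr 2
  simp [sub_mul]

lemma globpoly_eval (f : F[X]) (x : F) (v : Fin k → F) :
    (globpoly r f v).eval x = ∑ idx : Fin k, v idx * (f.eval x) ^ (idx.val / r) * x ^ (idx.val % r) := by
  rw [globpoly, eval_finset_sum]
  apply Finset.sum_congr rfl
  intro idx _
  simp [eval_mul, eval_pow]
  ring

lemma globpoly_eval_fiber (f : F[X]) (α y : F) (v : Fin k → F) (hf : f.eval α = y) :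
    (globpoly r f v).eval α = (locpoly r y v).eval α := by
  rw [globpoly_eval, locpoly_eval, hf]

lemma globpoly_natDegree_le (f : F[X]) (v : Fin k → F) (z : ℕ)
    (hr : 1 ≤ r) (hrdf : r ≤ f.natDegree)
    (hz : ∀ idx : Fin k, v idx ≠ 0 → degIdx r f.natDegree idx.val < z) (hz0 : 0 < z) :
    (globpoly r f v).natDegree ≤ z - 1 := by
  apply Polynomial.natDegree_sum_le_of_forall_le
  intro idx _
  by_cases hv : v idx = 0
  · simp [hv]
  · have e1 : (Polynomial.C (v idx)).natDegree = 0 := natDegree_C _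
    have e2 : (X ^ (idx.val % r) : F[X]).natDegree ≤ idx.val % r := natDegree_X_pow_le _
    have e3 : (f ^ (idx.val / r)).natDegree ≤ (idx.val / r) * f.natDegree := natDegree_pow_le
    have e4 : (Polynomial.C (v idx) * X ^ (idx.val % r)).natDegree ≤ idx.val % r :=
      le_trans natDegree_mul_le (by omega)
    have h1 : (Polynomial.C (v idx) * X ^ (idx.val % r) * f ^ (idx.val / r)).natDegree
        ≤ idx.val % r + (idx.val / r) * f.natDegree :=
      le_trans natDegree_mul_le (by omega)
    have h2 := hz idx hv
    rw [degIdx_eq _ _ _ hr hrdf] at h2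
    omega

lemma globpoly_coeff_top (f : F[X]) (v : Fin k → F) (hfm : f.Monic)
    (hr : 1 ≤ r) (hrdf : r ≤ f.natDegree) (idxM : Fin k)
    (hmax : ∀ idx : Fin k, v idx ≠ 0 → idx.val ≤ idxM.val) :
    (globpoly r f v).coeff (degIdx r f.natDegree idxM.val) = v idxM := by
  rw [globpoly, finset_sum_coeff]
  have hmonic : ∀ t j : ℕ, ((X : F[X]) ^ j * f ^ t).Monic :=
    fun t j => (monic_X_pow j).mul (hfm.pow t)
  have hdeg : ∀ t j : ℕ, ((X : F[X]) ^ j * f ^ t).natDegree = t * f.natDegree + j := by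
    intro t j
    rw [(monic_X_pow j).natDegree_mul (hfm.pow t), natDegree_X_pow, hfm.natDegree_pow]
    omega
  have hterm : ∀ idx : Fin k,
      Polynomial.C (v idx) * X ^ (idx.val % r) * f ^ (idx.val / r)
        = Polynomial.C (v idx) * (X ^ (idx.val % r) * f ^ (idx.val / r)) := by
    intro idx
    ring
  rw [Finset.sum_eq_single idxM]
  · rw [hterm, coeff_C_mul]
    have : (X ^ (idxM.val % r) * f ^ (idxM.val / r) : F[X]).coeff (degIdx r f.natDegree idxM.val) = 1 := by
      have hd := hdeg (idxM.val / r) (idxM.val % r)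
      rw [degIdx_eq _ _ _ hr hrdf, ← hd]
      exact (hmonic _ _).coeff_natDegree
    rw [this, mul_one]
  · intro idx _ hne
    by_cases hv : v idx = 0
    · simp [hv]
    · have hlt : idx.val < idxM.val := by
        have := hmax idx hv
        have : idx.val ≠ idxM.val := fun h => hne (Fin.ext h)
        omega
      rw [hterm, coeff_C_mul]
      have : (X ^ (idx.val % r) * f ^ (idx.val / r) : F[X]).coeff (degIdx r f.natDegree idxM.val) = 0 := by
        apply coeff_eq_zero_of_natDegree_lt
        rw [hdeg]
        rw [← degIdx_eq _ _ _ hr hrdf]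
        exact degIdx_strictMono r f.natDegree hr hlt
      rw [this, mul_zero]
  · intro h
    exact absurd (Finset.mem_univ idxM) h

lemma globpoly_ne_zero (f : F[X]) (v : Fin k → F) (hfm : f.Monic)
    (hr : 1 ≤ r) (hrdf : r ≤ f.natDegree) (hv : v ≠ 0) :
    globpoly r f v ≠ 0 := by
  classical
  have hne : (Finset.univ.filter (fun idx : Fin k => v idx ≠ 0)).Nonempty := by
    rcases Function.ne_iff.mp hv with ⟨idx, hidx⟩
    exact ⟨idx, by simp only [Finset.mem_filter, Finset.mem_univ, true_and]; exact hidx⟩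
  set idxM := (Finset.univ.filter (fun idx : Fin k => v idx ≠ 0)).max' hne with hM
  have hM_mem := (Finset.univ.filter (fun idx : Fin k => v idx ≠ 0)).max'_mem hne
  rw [Finset.mem_filter] at hM_mem
  have hmax : ∀ idx : Fin k, v idx ≠ 0 → idx.val ≤ idxM.val := by
    intro idx hidx
    have : idx ≤ idxM := Finset.le_max' _ _ (by simp [hidx])
    exact this
  intro h0
  have := globpoly_coeff_top r f v hfm hr hrdf idxM hmax
  rw [h0] at this
  simp only [coeff_zero] at this
  exact hM_mem.2 this.symm

lemma card_eval_zero_le {p : F[X]} (hp : p ≠ 0) {ι' : Type} [Fintype ι']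
    [DecidableEq ι'] (pts : ι' → F) (hinj : Function.Injective pts) :
    (Finset.univ.filter fun l => p.eval (pts l) = 0).card ≤ p.natDegree := by
  have h1 : ∀ l ∈ (Finset.univ.filter fun l => p.eval (pts l) = 0),
      pts l ∈ p.roots.toFinset := by
    intro l hl
    rw [Finset.mem_filter] at hl
    rw [Multiset.mem_toFinset, mem_roots hp]
    exact hl.2
  calc (Finset.univ.filter fun l => p.eval (pts l) = 0).card
      ≤ p.roots.toFinset.card := Finset.card_le_card_of_injOn pts h1 (fun x _ y _ h => hinj h)
  _ ≤ Multiset.card p.roots := Multiset.toFinset_card_le _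
  _ ≤ p.natDegree := Polynomial.card_roots' p








variable {F : Type} [Field F] [DecidableEq F]

lemma pairing {k : ℕ} (r : ℕ) (Q P : Polynomial F) (mM sS : ℕ)
    (hk : k = (mM-1)*r + sS) (hm : 1 ≤ mM) (hr : 1 ≤ r) (hs1 : 1 ≤ sS) (hsr : sS ≤ r)
    (hQ : Q.natDegree ≤ mM - 1) (hP : P.natDegree ≤ sS - 1) (y x : F) :
    ∑ idx : Fin k, (Q.coeff (idx.val / r) * P.coeff (idx.val % r)) * y ^ (idx.val / r) * x ^ (idx.val % r)
      = Q.eval y * P.eval x := by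
  set g : ℕ → F := fun idx => (Q.coeff (idx/r) * P.coeff (idx%r)) * y^(idx/r) * x^(idx%r)
    with hgdef
  have hstepA : ∑ idx : Fin k, (Q.coeff (idx.val / r) * P.coeff (idx.val % r)) * y ^ (idx.val / r) * x ^ (idx.val % r)
      = ∑ idx ∈ Finset.range k, g idx := Fin.sum_univ_eq_sum_range g k
  have hkle : k ≤ mM * r := by
    have h1 : (mM - 1) * r + r = mM * r := by
      have h2 : ((mM - 1) + 1) * r = (mM-1)*r + 1*r := Nat.add_mul _ _ _
      have h3 : (mM - 1) + 1 = mM := by omega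
      rw [h3] at h2
      omega
    omega
  have hstepB : ∑ idx ∈ Finset.range k, g idx = ∑ idx ∈ Finset.range (mM * r), g idx := by
    apply Finset.sum_subset
    · exact Finset.range_subset_range.mpr hkle
    · intro idx hmem hnot
      rw [Finset.mem_range] at hmem
      rw [Finset.mem_range, not_lt] at hnot
      have hjlt : idx % r < r := Nat.mod_lt _ (by omega)
      have hdm : idx / r * r + idx % r = idx := Nat.div_add_mod' idx r
      have hge : sS ≤ idx % r := by
        by_contra hlt2
        rw [not_le] at hlt2
        have h5 : idx / r * r ≤ (mM - 1) * r := by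
          apply Nat.mul_le_mul_right
          have : idx / r < mM := by
            rw [Nat.div_lt_iff_lt_mul (show 0 < r by omega)]
            omega
          omega
        omega
      have hPc : P.coeff (idx % r) = 0 :=
        coeff_eq_zero_of_natDegree_lt (by omega)
      simp [hgdef, hPc]
  have hstepC : ∑ idx ∈ Finset.range (mM * r), g idx
      = ∑ p ∈ Finset.range mM ×ˢ Finset.range r, (Q.coeff p.1 * y ^ p.1) * (P.coeff p.2 * x ^ p.2) := by
    apply Finset.sum_nbij' (i := fun idx => (idx / r, idx % r))
      (j := fun p => p.1 * r + p.2)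
    · intro idx hmem
      rw [Finset.mem_range] at hmem
      rw [Finset.mem_product, Finset.mem_range, Finset.mem_range]
      constructor
      · rw [Nat.div_lt_iff_lt_mul (show 0 < r by omega)]
        omega
      · exact Nat.mod_lt _ (by omega)
    · intro p hp
      rw [Finset.mem_product, Finset.mem_range, Finset.mem_range] at hp
      rw [Finset.mem_range]
      have h1 : p.1 * r + p.2 < p.1 * r + r := by omega
      have h2 : p.1 * r + r ≤ mM * r := by
        have : (p.1 + 1) * r = p.1 * r + r := by ring
        rw [← this]
        exact Nat.mul_le_mul_right _ (by omega)
      omega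
    · intro idx _
      exact Nat.div_add_mod' idx r
    · intro p hp
      rw [Finset.mem_product, Finset.mem_range, Finset.mem_range] at hp
      have hd : (p.1 * r + p.2) / r = p.1 := by
        rw [add_comm, Nat.add_mul_div_right _ _ (show 0 < r by omega),
          Nat.div_eq_of_lt hp.2]
        omega
      have hm' : (p.1 * r + p.2) % r = p.2 := by
        rw [add_comm, Nat.add_mul_mod_self_right, Nat.mod_eq_of_lt hp.2]
      rw [Prod.ext_iff]
      exact ⟨hd, hm'⟩
    · intro idx _
      simp only [hgdef]
      ring
  have hstepD : ∑ p ∈ Finset.range mM ×ˢ Finset.range r, (Q.coeff p.1 * y ^ p.1) * (P.coeff p.2 * x ^ p.2)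
      = (∑ t ∈ Finset.range mM, Q.coeff t * y ^ t) * (∑ j ∈ Finset.range r, P.coeff j * x ^ j) := by
    rw [Finset.sum_mul_sum]
    rw [Finset.sum_product]
  have hQe : Q.eval y = ∑ t ∈ Finset.range mM, Q.coeff t * y ^ t :=
    eval_eq_sum_range' (by omega) y
  have hPe : P.eval x = ∑ j ∈ Finset.range r, P.coeff j * x ^ j :=
    eval_eq_sum_range' (by omega) x
  rw [hstepA, hstepB, hstepC, hstepD, hQe, hPe]






variable {F : Type} [Field F] [DecidableEq F]

noncomputable def φco (r : ℕ) {k : ℕ} (y x : F) : (Fin k → F) →ₗ[F] F :=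
  ∑ idx : Fin k, (y ^ (idx.val / r) * x ^ (idx.val % r)) • LinearMap.proj idx

lemma φco_apply (r : ℕ) {k : ℕ} (y x : F) (v : Fin k → F) :
    φco r y x v = (locpoly r y v).eval x := by
  rw [locpoly_eval, φco]
  rw [LinearMap.sum_apply]
  apply Finset.sum_congr rfl
  intro idx _
  rw [LinearMap.smul_apply, LinearMap.proj_apply]
  simp only [smul_eq_mul]
  ring

lemma locpoly_zero (r : ℕ) {k : ℕ} (y : F) : locpoly r y (0 : Fin k → F) = 0 := by
  rw [locpoly]
  apply Finset.sum_eq_zero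
  intro idx _
  simp

lemma card_filter_val_lt (D t : ℕ) (h : t ≤ D) :
    ((Finset.univ : Finset (Fin D)).filter fun l => l.val < t).card = t := by
  apply Finset.card_eq_of_bijective (fun i hi => ⟨i, by omega⟩)
  · intro l hl
    rw [Finset.mem_filter] at hl
    exact ⟨l.val, hl.2, rfl⟩
  · intro i hi
    rw [Finset.mem_filter]
    exact ⟨Finset.mem_univ _, hi⟩
  · intro i j hi hj hij
    exact Fin.mk.inj_iff.mp hij

structure Code (F : Type) [Field F] [DecidableEq F] where
  r : ℕ
  k : ℕ
  mM : ℕ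
  sS : ℕ
  df : ℕ
  D : ℕ
  a : ℕ
  f : Polynomial F
  c : Fin a → F
  A : Fin a → Finset F
  pt : Fin a → Fin D → F
  hr : 1 ≤ r
  hk : k = (mM - 1) * r + sS
  hm2 : 2 ≤ mM
  hs1 : 1 ≤ sS
  hsr : sS ≤ r
  hma : mM ≤ a
  hfm : f.Monic
  hfd : f.natDegree = df
  hdfr : r < df
  hdfD : df ≤ D
  hcinj : Function.Injective c
  hA : ∀ i, (A i).card = df
  hAfib : ∀ i α, α ∈ A i ↔ f.eval α = c i
  hptinj : ∀ i, Function.Injective (pt i)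
  hptfib : ∀ i (l : Fin D), l.val < df → pt i l ∈ A i
  hptext : ∀ i (l : Fin D), df ≤ l.val → ∀ j, pt i l ∉ A j

namespace Code

variable {F : Type} [Field F] [DecidableEq F] (S : Code F)

noncomputable def φpt (e : Fin S.a × Fin S.D) : (Fin S.k → F) →ₗ[F] F :=
  φco S.r (S.c e.1) (S.pt e.1 e.2)

noncomputable def Mker (s : Finset (Fin S.a × Fin S.D)) : Submodule F (Fin S.k → F) :=
  ⨅ e ∈ s, LinearMap.ker (S.φpt e)

lemma mem_Mker {s : Finset (Fin S.a × Fin S.D)} {v : Fin S.k → F} :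
    v ∈ S.Mker s ↔ ∀ e ∈ s, S.φpt e v = 0 := by
  simp [Mker, Submodule.mem_iInf, LinearMap.mem_ker]

def eRank (e : Fin S.a × Fin S.D) : ℕ := e.1.val * S.D + e.2.val

lemma eRank_inj {e e' : Fin S.a × Fin S.D} (h : S.eRank e = S.eRank e') : e = e' := by
  unfold eRank at h
  have h1 : e.2.val < S.D := e.2.isLt
  have h2 : e'.2.val < S.D := e'.2.isLt
  have hfst : e.1.val = e'.1.val := by
    by_contra hne
    rcases Nat.lt_or_ge e.1.val e'.1.val with hlt | hge
    · have hh : e.1.val * S.D + S.D ≤ e'.1.val * S.D := by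
        calc e.1.val * S.D + S.D = (e.1.val + 1) * S.D := by ring
        _ ≤ e'.1.val * S.D := Nat.mul_le_mul_right _ (by omega)
      omega
    · have hlt2 : e'.1.val < e.1.val := by omega
      have hh : e'.1.val * S.D + S.D ≤ e.1.val * S.D := by
        calc e'.1.val * S.D + S.D = (e'.1.val + 1) * S.D := by ring
        _ ≤ e.1.val * S.D := Nat.mul_le_mul_right _ (by omega)
      omega
  have hmul : e.1.val * S.D = e'.1.val * S.D := by rw [hfst]
  have hsnd : e.2.val = e'.2.val := by omega
  ext
  · exact hfst
  · exact hsnd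

/-- the greedy ("general position") property of the extra evaluation points -/
def GP : Prop :=
  ∀ (i : Fin S.a) (l : Fin S.D), S.df ≤ l.val →
    ∀ s : Finset (Fin S.a × Fin S.D),
      (∀ e ∈ s, e.2.val < S.df ∨ S.eRank e < S.eRank (i, l)) →
      s.card + 1 ≤ S.k →
      ∀ v ∈ S.Mker s, locpoly S.r (S.c i) v ≠ 0 →
      ∃ w ∈ S.Mker s, (locpoly S.r (S.c i) w).eval (S.pt i l) ≠ 0

lemma A_disjoint {i j : Fin S.a} {α : F} (hi : α ∈ S.A i) (hj : α ∈ S.A j) : i = j := by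
  apply S.hcinj
  rw [← (S.hAfib i α).mp hi, ← (S.hAfib j α).mp hj]

lemma pt_fib_inj {e e' : Fin S.a × Fin S.D} (he : e.2.val < S.df) (he' : e'.2.val < S.df)
    (h : S.pt e.1 e.2 = S.pt e'.1 e'.2) : e = e' := by
  have h1 : S.pt e.1 e.2 ∈ S.A e.1 := S.hptfib _ _ he
  have h2 : S.pt e'.1 e'.2 ∈ S.A e'.1 := S.hptfib _ _ he'
  rw [h] at h1
  have hii : e.1 = e'.1 := S.A_disjoint h1 h2
  have h3 : S.pt e'.1 e.2 = S.pt e'.1 e'.2 := by rw [← hii] at h ⊢; exact h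
  have h4 := S.hptinj e'.1 h3
  ext
  · rw [hii]
  · rw [h4]

end Code






namespace Code

variable {F : Type} [Field F] [DecidableEq F] (S : Code F)

lemma Mker_def (s : Finset (Fin S.a × Fin S.D)) :
    S.Mker s = ⨅ e ∈ s, LinearMap.ker (S.φpt e) := rfl

lemma kdiv : (S.k - 1) / S.r = S.mM - 1 := by
  have h1 : S.k - 1 = (S.sS - 1) + (S.mM - 1) * S.r := by
    have := S.hk
    have := S.hs1
    omega
  rw [h1, Nat.add_mul_div_right _ _ (show 0 < S.r by exact S.hr),
    Nat.div_eq_of_lt (by have := S.hsr; have := S.hr; omega)]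
  omega

lemma idx_div_le (idx : Fin S.k) : idx.val / S.r ≤ S.mM - 1 := by
  have h2 := S.kdiv
  calc idx.val / S.r ≤ (S.k - 1) / S.r := Nat.div_le_div_right (by omega)
  _ = S.mM - 1 := h2

/-- dimension bound from vanishing at many field points -/
lemma finrank_Mker_le (Bset : Finset (Fin S.a × Fin S.D))
    (hBfib : ∀ e ∈ Bset, e.2.val < S.df) :
    Module.finrank F ↥(S.Mker Bset) + min S.k (Bset.card - (S.mM - 1) * (S.df - S.r)) ≤ S.k := by
  classical
  set z₀ := Bset.card with hz₀
  set w₀ := min S.k (z₀ - (S.mM - 1) * (S.df - S.r)) with hw₀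
  set Thigh := (Finset.univ : Finset (Fin S.k)).filter
    (fun idx => ¬ (degIdx S.r S.df idx.val < z₀)) with hThigh
  have hrank : Module.finrank F ↥(S.Mker Bset) ≤ Thigh.card := by
    apply finrank_le_card_of_inj
    intro w hw hwzero
    by_contra hw0
    have hglob : globpoly S.r S.f w ≠ 0 := by
      apply globpoly_ne_zero S.r S.f w S.hfm S.hr (by rw [S.hfd]; exact le_of_lt S.hdfr) hw0
    have hsupp : ∀ idx : Fin S.k, w idx ≠ 0 → degIdx S.r S.df idx.val < z₀ := by
      intro idx hidx
      by_contra hc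
      apply hidx
      apply hwzero
      rw [hThigh, Finset.mem_filter]
      exact ⟨Finset.mem_univ _, hc⟩
    rcases Nat.eq_zero_or_pos z₀ with hz | hz
    · apply hw0
      ext idx
      by_contra hne
      have := hsupp idx hne
      omega
    · have hdeg : (globpoly S.r S.f w).natDegree ≤ z₀ - 1 := by
        have := globpoly_natDegree_le S.r S.f w z₀ S.hr (by rw [S.hfd]; exact le_of_lt S.hdfr)
          (by rw [S.hfd]; exact hsupp) hz
        exact this
      -- the Bset points are distinct roots
      have hmem : ∀ e ∈ Bset, S.pt e.1 e.2 ∈ (globpoly S.r S.f w).roots.toFinset := by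
        intro e he
        rw [Multiset.mem_toFinset, mem_roots hglob]
        have hfib : S.pt e.1 e.2 ∈ S.A e.1 := S.hptfib _ _ (hBfib e he)
        have hy : S.f.eval (S.pt e.1 e.2) = S.c e.1 := (S.hAfib _ _).mp hfib
        have := globpoly_eval_fiber S.r S.f (S.pt e.1 e.2) (S.c e.1) w hy
        rw [IsRoot.def, this, ← φco_apply]
        have := (S.mem_Mker).mp hw e he
        exact this
      have hcard : z₀ ≤ (globpoly S.r S.f w).roots.toFinset.card := by
        rw [hz₀]
        apply Finset.card_le_card_of_injOn (fun e => S.pt e.1 e.2) (fun e he => hmem e he)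
        intro e he e' he' hee
        exact S.pt_fib_inj (hBfib e he) (hBfib e' he') hee
      have := (Multiset.toFinset_card_le (globpoly S.r S.f w).roots).trans
        (Polynomial.card_roots' _)
      omega
  have hlow : w₀ ≤ ((Finset.univ : Finset (Fin S.k)).filter
      (fun idx => degIdx S.r S.df idx.val < z₀)).card := by
    have hsub : ((Finset.univ : Finset (Fin S.k)).filter (fun idx => idx.val < w₀))
        ⊆ ((Finset.univ : Finset (Fin S.k)).filter (fun idx => degIdx S.r S.df idx.val < z₀)) := by
      intro idx hidx
      rw [Finset.mem_filter] at hidx ⊢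
      refine ⟨Finset.mem_univ _, ?_⟩
      have h1 : degIdx S.r S.df idx.val ≤ idx.val + (S.mM - 1) * (S.df - S.r) :=
        degIdx_le S.r S.df idx.val S.mM S.hr (S.idx_div_le idx)
      have h2 : idx.val < w₀ := hidx.2
      have h3 : w₀ ≤ z₀ - (S.mM - 1) * (S.df - S.r) := min_le_right _ _
      omega
    have hcard2 : ((Finset.univ : Finset (Fin S.k)).filter (fun idx => idx.val < w₀)).card = w₀ :=
      card_filter_val_lt S.k w₀ (min_le_left _ _)
    calc w₀ = _ := hcard2.symm
    _ ≤ _ := Finset.card_le_card hsub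
  have hsplit := Finset.card_filter_add_card_filter_not
    (s := (Finset.univ : Finset (Fin S.k))) (fun idx => degIdx S.r S.df idx.val < z₀)
  have hk : (Finset.univ : Finset (Fin S.k)).card = S.k := by simp
  rw [hk] at hsplit
  have : Thigh.card = ((Finset.univ : Finset (Fin S.k)).filter
      (fun idx => ¬ degIdx S.r S.df idx.val < z₀)).card := rfl
  omega

/-- the chain argument: each extra zero in a live group cuts one dimension -/
lemma chain (hGP : S.GP) (v : Fin S.k → F)
    (B : Finset (Fin S.a × Fin S.D)) (hB : ∀ e ∈ B, e.2.val < S.df) :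
    ∀ (E : Finset (Fin S.a × Fin S.D)), (∀ e ∈ E, S.df ≤ e.2.val) →
      (∀ e ∈ E, locpoly S.r (S.c e.1) v ≠ 0) →
      (∀ e ∈ E, S.φpt e v = 0) → v ∈ S.Mker B →
      E.card + Module.finrank F ↥(S.Mker (B ∪ E)) ≤ Module.finrank F ↥(S.Mker B) := by
  intro E
  induction E using Finset.strongInduction with
  | _ E ih =>
    intro hEext hElive hEzero hvB
    rcases Finset.eq_empty_or_nonempty E with rfl | hne
    · rw [Finset.union_empty]
      simp
    · obtain ⟨es, hesmem, hesmax⟩ := Finset.exists_max_image E S.eRank hne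
      set E' := E.erase es with hE'
      have hE'ss : E' ⊂ E := Finset.erase_ssubset hesmem
      have hvE' : v ∈ S.Mker (B ∪ E') := by
        rw [mem_Mker]
        intro e he
        rcases Finset.mem_union.mp he with h | h
        · exact (S.mem_Mker).mp hvB e h
        · exact hEzero e (Finset.mem_of_mem_erase h)
      have hvne : v ≠ 0 := by
        intro h0
        apply hElive es hesmem
        rw [h0, locpoly_zero]
      obtain ⟨s, hs_sub, hs_eq, hs_card⟩ := kernel_reduce S.φpt (B ∪ E')
      rw [← Mker_def, ← Mker_def] at hs_eq
      rw [← Mker_def] at hs_card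
      have hpos : 1 ≤ Module.finrank F ↥(S.Mker (B ∪ E')) :=
        finrank_pos_of_ne_bot v hvE' hvne
      have hscard : s.card + 1 ≤ S.k := by omega
      have hbefore : ∀ e ∈ s, e.2.val < S.df ∨ S.eRank e < S.eRank (es.1, es.2) := by
        intro e hes
        rcases Finset.mem_union.mp (hs_sub hes) with h | h
        · exact Or.inl (hB e h)
        · right
          have h1 : S.eRank e ≤ S.eRank es := hesmax e (Finset.mem_of_mem_erase h)
          have h2 : e ≠ es := Finset.ne_of_mem_erase h
          have h3 : S.eRank e ≠ S.eRank es := fun hh => h2 (S.eRank_inj hh)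
          have h4 : (es.1, es.2) = es := rfl
          rw [h4]
          omega
      have hvs : v ∈ S.Mker s := by
        rw [hs_eq]
        exact hvE'
      obtain ⟨w, hwmem, hwne⟩ := hGP es.1 es.2 (hEext es hesmem) s hbefore hscard v hvs
        (hElive es hesmem)
      have hwmem' : w ∈ S.Mker (B ∪ E') := by rw [← hs_eq]; exact hwmem
      have hφw : S.φpt es w ≠ 0 := by
        rw [φpt, φco_apply]
        exact hwne
      have hlt : Module.finrank F ↥(S.Mker (B ∪ E') ⊓ LinearMap.ker (S.φpt es))
          < Module.finrank F ↥(S.Mker (B ∪ E')) :=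
        finrank_inf_ker_lt w hwmem' hφw
      have hEeq : E = insert es E' := (Finset.insert_erase hesmem).symm
      have hunion : B ∪ E = insert es (B ∪ E') := by
        rw [hEeq, Finset.union_insert]
      have hMeq : S.Mker (B ∪ E) = LinearMap.ker (S.φpt es) ⊓ S.Mker (B ∪ E') := by
        rw [hunion, Mker_def, Finset.iInf_insert, ← Mker_def]
      have hIH := ih E' hE'ss (fun e he => hEext e (Finset.mem_of_mem_erase he))
        (fun e he => hElive e (Finset.mem_of_mem_erase he))
        (fun e he => hEzero e (Finset.mem_of_mem_erase he)) hvB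
      have hcardE : E.card = E'.card + 1 := by
        rw [hEeq]
        rw [Finset.card_insert_of_notMem (Finset.notMem_erase _ _)]
      rw [hMeq]
      rw [inf_comm]
      omega

end Code






namespace Code

variable {F : Type} [Field F] [DecidableEq F] (S : Code F)

lemma degIdx_bound (idx : Fin S.k) :
    degIdx S.r S.df idx.val ≤ (S.mM - 1) * S.df + (S.sS - 1) := by
  have hd := S.idx_div_le idx
  have hrpos : 0 < S.r := S.hr
  have hdm : idx.val / S.r * S.r + idx.val % S.r = idx.val := Nat.div_add_mod' _ _
  have hmod : idx.val % S.r < S.r := Nat.mod_lt _ hrpos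
  have hdeq := degIdx_eq S.r S.df idx.val S.hr (le_of_lt S.hdfr)
  have hk := S.hk
  have hm2 := S.hm2
  have hs1 := S.hs1
  have hsr := S.hsr
  have hdfr := S.hdfr
  rcases Nat.eq_or_lt_of_le hd with heq | hlt
  · -- top block
    have hmul : idx.val / S.r * S.r = (S.mM - 1) * S.r := by rw [heq]
    have hmul2 : idx.val / S.r * S.df = (S.mM - 1) * S.df := by rw [heq]
    have hidxlt : idx.val < S.k := idx.isLt
    omega
  · have hle : idx.val / S.r ≤ S.mM - 2 := by omega
    have hmul : idx.val / S.r * S.df ≤ (S.mM - 2) * S.df :=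
      Nat.mul_le_mul_right _ hle
    have hmul2 : (S.mM - 2) * S.df + S.df = (S.mM - 1) * S.df := by
      have h3 : (S.mM - 2) + 1 = S.mM - 1 := by omega
      calc (S.mM - 2) * S.df + S.df = ((S.mM - 2) + 1) * S.df := by ring
      _ = (S.mM - 1) * S.df := by rw [h3]
    omega

lemma Bset_card_le_natDegree (Bset : Finset (Fin S.a × Fin S.D))
    (hBfib : ∀ e ∈ Bset, e.2.val < S.df) (w : Fin S.k → F)
    (hw : w ∈ S.Mker Bset) (hw0 : w ≠ 0) :
    Bset.card ≤ (globpoly S.r S.f w).natDegree := by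
  classical
  have hglob : globpoly S.r S.f w ≠ 0 :=
    globpoly_ne_zero S.r S.f w S.hfm S.hr (by rw [S.hfd]; exact le_of_lt S.hdfr) hw0
  have hmem : ∀ e ∈ Bset, S.pt e.1 e.2 ∈ (globpoly S.r S.f w).roots.toFinset := by
    intro e he
    rw [Multiset.mem_toFinset, mem_roots hglob]
    have hfib : S.pt e.1 e.2 ∈ S.A e.1 := S.hptfib _ _ (hBfib e he)
    have hy : S.f.eval (S.pt e.1 e.2) = S.c e.1 := (S.hAfib _ _).mp hfib
    have h2 := globpoly_eval_fiber S.r S.f (S.pt e.1 e.2) (S.c e.1) w hy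
    rw [IsRoot.def, h2, ← φco_apply]
    exact (S.mem_Mker).mp hw e he
  calc Bset.card ≤ (globpoly S.r S.f w).roots.toFinset.card := by
        apply Finset.card_le_card_of_injOn (fun e => S.pt e.1 e.2) (fun e he => hmem e he)
        intro e he e' he' hee
        exact S.pt_fib_inj (hBfib e he) (hBfib e' he') hee
  _ ≤ Multiset.card (globpoly S.r S.f w).roots := Multiset.toFinset_card_le _
  _ ≤ _ := Polynomial.card_roots' _

lemma globpoly_natDegree_le_γ (w : Fin S.k → F) :
    (globpoly S.r S.f w).natDegree ≤ (S.mM - 1) * S.df + (S.sS - 1) := by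
  have h := globpoly_natDegree_le S.r S.f w ((S.mM - 1) * S.df + (S.sS - 1) + 1) S.hr
    (by rw [S.hfd]; exact le_of_lt S.hdfr)
    (by
      intro idx _
      rw [S.hfd]
      have := S.degIdx_bound idx
      omega)
    (by omega)
  omega

/-- The key distance bound: a nonzero message vanishes on at most
`k - 1 + (mM-1)(D-r)` coordinates. -/
lemma zeros_le (hGP : S.GP) (v : Fin S.k → F) (hv : v ≠ 0) :
    ((Finset.univ : Finset (Fin S.a × Fin S.D)).filter
      (fun e => S.φpt e v = 0)).card + 1 ≤ S.k + (S.mM - 1) * (S.D - S.r) := by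
  classical
  set Zer := ((Finset.univ : Finset (Fin S.a × Fin S.D)).filter
      (fun e => S.φpt e v = 0)) with hZer
  set G0 := (Finset.univ : Finset (Fin S.a)).filter
      (fun i => locpoly S.r (S.c i) v = 0) with hG0
  set g := G0.card with hg
  set fibslots := (Finset.univ : Finset (Fin S.D)).filter (fun l => l.val < S.df)
    with hfibslots
  set Dead := G0 ×ˢ (Finset.univ : Finset (Fin S.D)) with hDead
  set Zf := Zer.filter (fun e => e.1 ∉ G0 ∧ e.2.val < S.df) with hZf
  set Ze := Zer.filter (fun e => e.1 ∉ G0 ∧ S.df ≤ e.2.val) with hZe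
  have hcover : Zer ⊆ Dead ∪ Zf ∪ Ze := by
    intro e he
    by_cases hG : e.1 ∈ G0
    · apply Finset.mem_union_left
      apply Finset.mem_union_left
      rw [hDead, Finset.mem_product]
      exact ⟨hG, Finset.mem_univ _⟩
    · rcases Nat.lt_or_ge e.2.val S.df with hl | hl
      · apply Finset.mem_union_left
        apply Finset.mem_union_right
        rw [hZf, Finset.mem_filter]
        exact ⟨he, hG, hl⟩
      · apply Finset.mem_union_right
        rw [hZe, Finset.mem_filter]
        exact ⟨he, hG, hl⟩
  have hZer_le : Zer.card ≤ Dead.card + Zf.card + Ze.card := by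
    calc Zer.card ≤ (Dead ∪ Zf ∪ Ze).card := Finset.card_le_card hcover
    _ ≤ (Dead ∪ Zf).card + Ze.card := Finset.card_union_le _ _
    _ ≤ Dead.card + Zf.card + Ze.card := by
        have := Finset.card_union_le Dead Zf
        omega
  have hDeadcard : Dead.card = g * S.D := by
    rw [hDead, Finset.card_product, Finset.card_univ]
    simp [hg]
  set Bset := (G0 ×ˢ fibslots) ∪ Zf with hBset
  have hBfib : ∀ e ∈ Bset, e.2.val < S.df := by
    intro e he
    rcases Finset.mem_union.mp he with h | h
    · rw [Finset.mem_product, hfibslots] at h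
      exact (Finset.mem_filter.mp h.2).2
    · exact (Finset.mem_filter.mp h).2.2
  have hBcard : Bset.card = g * S.df + Zf.card := by
    rw [hBset, Finset.card_union_of_disjoint, Finset.card_product]
    · congr 2
      exact card_filter_val_lt S.D S.df S.hdfD
    · rw [Finset.disjoint_left]
      intro e he1 he2
      rw [Finset.mem_product] at he1
      exact (Finset.mem_filter.mp he2).2.1 he1.1
  have hvB : v ∈ S.Mker Bset := by
    rw [mem_Mker]
    intro e he
    rcases Finset.mem_union.mp he with h | h
    · rw [Finset.mem_product] at h
      have hloc : locpoly S.r (S.c e.1) v = 0 := (Finset.mem_filter.mp h.1).2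
      rw [φpt, φco_apply, hloc, eval_zero]
    · exact (Finset.mem_filter.mp ((Finset.mem_filter.mp h).1)).2
  have hz₀γ : Bset.card ≤ (S.mM - 1) * S.df + (S.sS - 1) :=
    le_trans (S.Bset_card_le_natDegree Bset hBfib v hvB hv) (S.globpoly_natDegree_le_γ v)
  have hgle : g ≤ S.mM - 1 := by
    by_contra hc
    rw [not_le] at hc
    have h1 : S.mM ≤ g := by omega
    have h2 : S.mM * S.df ≤ g * S.df := Nat.mul_le_mul_right _ h1
    have h3 : S.mM * S.df = (S.mM - 1) * S.df + S.df := by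
      have h4 : S.mM = (S.mM - 1) + 1 := by have := S.hm2; omega
      calc S.mM * S.df = ((S.mM - 1) + 1) * S.df := by rw [← h4]
      _ = (S.mM - 1) * S.df + S.df := by ring
    have h5 : g * S.df ≤ Bset.card := by omega
    have := S.hdfr
    have := S.hsr
    omega
  have hdim := S.finrank_Mker_le Bset hBfib
  have hchain := S.chain hGP v Bset hBfib Ze
    (fun e he => (Finset.mem_filter.mp he).2.2)
    (by
      intro e he
      have h1 : e.1 ∉ G0 := (Finset.mem_filter.mp he).2.1
      rw [hG0, Finset.mem_filter] at h1
      intro hcon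
      exact h1 ⟨Finset.mem_univ _, hcon⟩)
    (fun e he => (Finset.mem_filter.mp ((Finset.mem_filter.mp he).1)).2)
    hvB
  have hpos : 1 ≤ Module.finrank F ↥(S.Mker (Bset ∪ Ze)) := by
    apply finrank_pos_of_ne_bot v _ hv
    rw [mem_Mker]
    intro e he
    rcases Finset.mem_union.mp he with h | h
    · exact (S.mem_Mker).mp hvB e h
    · exact (Finset.mem_filter.mp ((Finset.mem_filter.mp h).1)).2
  -- final arithmetic
  have e1 : (S.df - S.r) + (S.D - S.df) = S.D - S.r := by
    have := S.hdfr
    have := S.hdfD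
    omega
  have e2 : (S.mM - 1) * (S.df - S.r) + (S.mM - 1) * (S.D - S.df)
      = (S.mM - 1) * (S.D - S.r) := by
    rw [← Nat.mul_add, e1]
  have e3 : g * S.df + g * (S.D - S.df) = g * S.D := by
    rw [← Nat.mul_add]
    congr 1
    have := S.hdfD
    omega
  have e4 : g * (S.D - S.df) ≤ (S.mM - 1) * (S.D - S.df) :=
    Nat.mul_le_mul_right _ hgle
  rcases le_total S.k (Bset.card - (S.mM - 1) * (S.df - S.r)) with hmin | hmin
  · rw [min_eq_left hmin] at hdim
    omega
  · rw [min_eq_right hmin] at hdim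
    omega

end Code






namespace Code

variable {F : Type} [Field F] [DecidableEq F] (S : Code F)

lemma kpos : 1 ≤ S.k := by
  have := S.hk; have := S.hs1; omega

lemma kmod : (S.k - 1) % S.r = S.sS - 1 := by
  have h1 : S.k - 1 = (S.sS - 1) + (S.mM - 1) * S.r := by
    have := S.hk; have := S.hs1; omega
  rw [h1, Nat.add_mul_mod_self_right, Nat.mod_eq_of_lt (by have := S.hsr; have := S.hr; omega)]

lemma pt_image (i : Fin S.a) :
    ((Finset.univ : Finset (Fin S.D)).filter (fun l => l.val < S.df)).image (S.pt i)
      = S.A i := by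
  apply Finset.eq_of_subset_of_card_le
  · intro x hx
    rw [Finset.mem_image] at hx
    obtain ⟨l, hl, rfl⟩ := hx
    exact S.hptfib i l (Finset.mem_filter.mp hl).2
  · rw [Finset.card_image_of_injOn (fun x _ y _ h => S.hptinj i h)]
    rw [card_filter_val_lt S.D S.df S.hdfD, S.hA i]

lemma locality (i : Fin S.a) (v v' : Fin S.k → F)
    (hdiff : ∃ l : Fin S.D, S.φpt (i, l) v ≠ S.φpt (i, l) v') :
    S.D - (S.r - 1) ≤ ((Finset.univ : Finset (Fin S.D)).filter
      (fun l => S.φpt (i, l) v ≠ S.φpt (i, l) v')).card := by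
  classical
  set w := v - v' with hwdef
  have hsub : ∀ l : Fin S.D, S.φpt (i, l) v - S.φpt (i, l) v'
      = (locpoly S.r (S.c i) w).eval (S.pt i l) := by
    intro l
    rw [hwdef, locpoly_sub, eval_sub, ← φco_apply, ← φco_apply]
    rfl
  obtain ⟨l₀, hl₀⟩ := hdiff
  have hwne : locpoly S.r (S.c i) w ≠ 0 := by
    intro h0
    apply hl₀
    have := hsub l₀
    rw [h0, eval_zero] at this
    have h2 : S.φpt (i, l₀) v - S.φpt (i, l₀) v' = 0 := this
    rw [sub_eq_zero] at h2
    exact h2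
  have hzeros : ((Finset.univ : Finset (Fin S.D)).filter
      (fun l => (locpoly S.r (S.c i) w).eval (S.pt i l) = 0)).card ≤ S.r - 1 := by
    calc ((Finset.univ : Finset (Fin S.D)).filter
        (fun l => (locpoly S.r (S.c i) w).eval (S.pt i l) = 0)).card
        ≤ (locpoly S.r (S.c i) w).natDegree := card_eval_zero_le hwne (S.pt i) (S.hptinj i)
    _ ≤ S.r - 1 := locpoly_natDegree_le S.r (S.c i) w S.hr
  have hiff : ∀ l : Fin S.D, (S.φpt (i, l) v ≠ S.φpt (i, l) v')
      ↔ ¬ ((locpoly S.r (S.c i) w).eval (S.pt i l) = 0) := by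
    intro l
    rw [← hsub l, sub_eq_zero]
  have hsplit := Finset.card_filter_add_card_filter_not
    (s := (Finset.univ : Finset (Fin S.D)))
    (fun l => (locpoly S.r (S.c i) w).eval (S.pt i l) = 0)
  have hcarduniv : (Finset.univ : Finset (Fin S.D)).card = S.D := by simp
  have heqf : ((Finset.univ : Finset (Fin S.D)).filter
      (fun l => S.φpt (i, l) v ≠ S.φpt (i, l) v'))
      = ((Finset.univ : Finset (Fin S.D)).filter
      (fun l => ¬ ((locpoly S.r (S.c i) w).eval (S.pt i l) = 0))) := by
    apply Finset.filter_congr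
    intro l _
    exact hiff l

  rw [heqf]
  omega

lemma exists_exact_word :
    ∃ v : Fin S.k → F, v ≠ 0 ∧
      ((Finset.univ : Finset (Fin S.a × Fin S.D)).filter
        (fun e => S.φpt e v = 0)).card = (S.mM - 1) * S.D + (S.sS - 1) := by
  classical
  have hm1a : S.mM - 1 < S.a := by have := S.hma; have := S.hm2; omega
  set firstset := (Finset.univ : Finset (Fin S.a)).filter (fun i => i.val < S.mM - 1)
    with hfirst
  have hfirstcard : firstset.card = S.mM - 1 :=
    card_filter_val_lt S.a (S.mM - 1) (by omega)
  set istar : Fin S.a := ⟨S.mM - 1, hm1a⟩ with histar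
  have histar_not : istar ∉ firstset := by
    rw [hfirst, Finset.mem_filter]
    intro h
    exact absurd h.2 (by simp [histar])
  obtain ⟨Ps, hPs_sub, hPs_card⟩ :=
    Finset.exists_subset_card_eq (show S.sS - 1 ≤ (S.A istar).card by
      rw [S.hA istar]; have := S.hsr; have := S.hdfr; omega)
  set Q : Polynomial F := ∏ i ∈ firstset, (X - C (S.c i)) with hQ
  set P : Polynomial F := pS Ps with hP
  have hQmonic : Q.Monic := monic_prod_of_monic _ _ (fun i _ => monic_X_sub_C _)
  have hQdeg : Q.natDegree = S.mM - 1 := by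
    rw [hQ, natDegree_prod _ _ (fun i _ => X_sub_C_ne_zero _)]
    simp [natDegree_X_sub_C, hfirstcard]
  have hPdeg : P.natDegree = S.sS - 1 := by
    rw [hP, pS_natDegree, hPs_card]
  have hQzero : ∀ y : F, Q.eval y = 0 ↔ ∃ i ∈ firstset, y = S.c i := by
    intro y
    rw [hQ, eval_prod, Finset.prod_eq_zero_iff]
    constructor
    · rintro ⟨i, hi, h⟩
      simp only [eval_sub, eval_X, eval_C, sub_eq_zero] at h
      exact ⟨i, hi, h⟩
    · rintro ⟨i, hi, h⟩
      exact ⟨i, hi, by simp [h]⟩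
  set v : Fin S.k → F := fun idx => Q.coeff (idx.val / S.r) * P.coeff (idx.val % S.r)
    with hv
  have hval : ∀ (y x : F), φco S.r y x v = Q.eval y * P.eval x := by
    intro y x
    rw [φco_apply, locpoly_eval]
    exact pairing S.r Q P S.mM S.sS S.hk (by have := S.hm2; omega) S.hr S.hs1 S.hsr
      (le_of_eq hQdeg) (le_of_eq hPdeg) y x
  have hφval : ∀ e : Fin S.a × Fin S.D,
      S.φpt e v = Q.eval (S.c e.1) * P.eval (S.pt e.1 e.2) := fun e => hval _ _
  -- v is nonzero
  have hktop : S.k - 1 < S.k := by have := S.kpos; omega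
  have hvtop : v ⟨S.k - 1, hktop⟩ = 1 := by
    have h1 : v ⟨S.k - 1, hktop⟩
        = Q.coeff ((S.k - 1) / S.r) * P.coeff ((S.k - 1) % S.r) := rfl
    rw [h1, S.kdiv, S.kmod, ← hQdeg, ← hPdeg, hQmonic.coeff_natDegree,
      (pS_monic Ps).coeff_natDegree, one_mul]
  have hvne : v ≠ 0 := by
    intro h0
    have h1 : (1 : F) = 0 := by
      rw [← hvtop]
      exact congrFun h0 _
    exact one_ne_zero h1
  refine ⟨v, hvne, ?_⟩
  -- identify the zero set
  set pslots := (Finset.univ : Finset (Fin S.D)).filter (fun l => S.pt istar l ∈ Ps)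
    with hpslots
  have hzeroset : (Finset.univ : Finset (Fin S.a × Fin S.D)).filter
      (fun e => S.φpt e v = 0)
      = (firstset ×ˢ (Finset.univ : Finset (Fin S.D))) ∪ ({istar} ×ˢ pslots) := by
    ext e
    rw [Finset.mem_filter, Finset.mem_union, Finset.mem_product, Finset.mem_product,
      Finset.mem_singleton]
    constructor
    · rintro ⟨-, hz⟩
      rw [hφval e, mul_eq_zero] at hz
      rcases hz with hz | hz
      · left
        rw [hQzero] at hz
        obtain ⟨i, hi, hci⟩ := hz
        have : e.1 = i := S.hcinj hci
        rw [this]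
        exact ⟨hi, Finset.mem_univ _⟩
      · right
        rw [hP, pS_eval_eq_zero_iff] at hz
        have hA : S.pt e.1 e.2 ∈ S.A istar := hPs_sub hz
        have hfibslot : e.2.val < S.df := by
          by_contra hc
          rw [not_lt] at hc
          exact S.hptext e.1 e.2 hc istar hA
        have he1 : e.1 = istar := S.A_disjoint (S.hptfib e.1 e.2 hfibslot) hA
        refine ⟨he1, ?_⟩
        rw [hpslots, Finset.mem_filter]
        refine ⟨Finset.mem_univ _, ?_⟩
        rw [← he1]
        exact hz
    · intro h
      refine ⟨Finset.mem_univ _, ?_⟩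
      rw [hφval e, mul_eq_zero]
      rcases h with ⟨h1, -⟩ | ⟨h1, h2⟩
      · left
        rw [hQzero]
        exact ⟨e.1, h1, rfl⟩
      · right
        rw [hP, pS_eval_eq_zero_iff]
        rw [hpslots, Finset.mem_filter] at h2
        rw [h1]
        exact h2.2
  rw [hzeroset]
  have hdisj : Disjoint (firstset ×ˢ (Finset.univ : Finset (Fin S.D)))
      ({istar} ×ˢ pslots) := by
    rw [Finset.disjoint_left]
    intro e he1 he2
    rw [Finset.mem_product] at he1 he2
    rw [Finset.mem_singleton] at he2
    apply histar_not
    rw [← he2.1]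
    exact he1.1
  rw [Finset.card_union_of_disjoint hdisj, Finset.card_product, Finset.card_product,
    Finset.card_univ, Finset.card_singleton, hfirstcard]
  have hpscard : pslots.card = S.sS - 1 := by
    have hsupset : Ps ⊆ pslots.image (S.pt istar) := by
      intro x hx
      have hxA : x ∈ S.A istar := hPs_sub hx
      rw [← S.pt_image istar, Finset.mem_image] at hxA
      obtain ⟨l, hl, rfl⟩ := hxA
      rw [Finset.mem_image]
      refine ⟨l, ?_, rfl⟩
      rw [hpslots, Finset.mem_filter]
      exact ⟨Finset.mem_univ _, hx⟩
    have hsubset : pslots.image (S.pt istar) ⊆ Ps := by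
      intro x hx
      rw [Finset.mem_image] at hx
      obtain ⟨l, hl, rfl⟩ := hx
      exact (Finset.mem_filter.mp hl).2
    have himg : pslots.image (S.pt istar) = Ps := Finset.Subset.antisymm hsubset hsupset
    rw [← hPs_card, ← himg,
      Finset.card_image_of_injOn (fun x _ y _ h => S.hptinj istar h)]
  rw [hpscard, Fintype.card_fin]
  ring

end Code






lemma mem_biInf_ker {F : Type} [Field F] {k : ℕ} {ι' : Type}
    (φ : ι' → ((Fin k → F) →ₗ[F] F)) (s : Finset ι') (x : Fin k → F) :
    x ∈ (⨅ e ∈ s, LinearMap.ker (φ e)) ↔ ∀ e ∈ s, φ e x = 0 := by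
  simp [Submodule.mem_iInf, LinearMap.mem_ker]

lemma biInf_ker_congr {F : Type} [Field F] {k : ℕ} {ι' : Type}
    (φ ψ : ι' → ((Fin k → F) →ₗ[F] F)) (s : Finset ι')
    (h : ∀ e ∈ s, φ e = ψ e) :
    (⨅ e ∈ s, LinearMap.ker (φ e)) = (⨅ e ∈ s, LinearMap.ker (ψ e)) := by
  ext x
  rw [mem_biInf_ker, mem_biInf_ker]
  constructor
  · intro hx e he
    rw [← h e he]
    exact hx e he
  · intro hx e he
    rw [h e he]
    exact hx e he

lemma exists_code (F : Type) [Field F] [Fintype F] [DecidableEq F]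
    (r k mM sS df D a : ℕ) (f : Polynomial F) (c : Fin a → F) (A : Fin a → Finset F)
    (hr : 1 ≤ r) (hk : k = (mM - 1) * r + sS) (hm2 : 2 ≤ mM) (hs1 : 1 ≤ sS)
    (hsr : sS ≤ r) (hma : mM ≤ a) (hfm : f.Monic) (hfd : f.natDegree = df)
    (hdfr : r < df) (hdfD : df ≤ D)
    (hcinj : Function.Injective c) (hA : ∀ i, (A i).card = df)
    (hAfib : ∀ i α, α ∈ A i ↔ f.eval α = c i)
    (h3k : df < D → 3 * k ≤ a * D)
    (hHQ : df < D → 2*(a*D) + 2 * ((a*D).choose (k-1)) * r < Fintype.card F) :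
    ∃ S : Code F, S.r = r ∧ S.k = k ∧ S.mM = mM ∧ S.sS = sS ∧ S.df = df ∧ S.D = D ∧
      S.a = a ∧ S.GP := by
  classical
  have ha1 : 1 ≤ a := by omega
  -- fiber point enumeration
  have hfibcast : ∀ (i : Fin a) (l : Fin D), l.val < df → l.val < (A i).card := by
    intro i l h
    rw [hA i]
    exact h
  set fib : Fin a → Fin D → F :=
    fun i l => if h : l.val < df then ((A i).equivFin.symm ⟨l.val, hfibcast i l h⟩ : F)
      else 0 with hfibdef
  have hfibA : ∀ i l (h : l.val < df), fib i l ∈ A i := by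
    intro i l h
    rw [hfibdef]
    simp only [dif_pos h]
    exact ((A i).equivFin.symm ⟨l.val, hfibcast i l h⟩).2
  have hfibinj : ∀ i (l l' : Fin D) (h : l.val < df) (h' : l'.val < df),
      fib i l = fib i l' → l = l' := by
    intro i l l' h h' heq
    rw [hfibdef] at heq
    simp only [dif_pos h, dif_pos h'] at heq
    have h2 := (A i).equivFin.symm.injective (Subtype.ext heq)
    have h3 : l.val = l'.val := Fin.mk.inj_iff.mp h2
    exact Fin.ext h3
  set ND := D - df with hND
  set eIdxN : Fin a × Fin D → ℕ := fun e => e.1.val * ND + (e.2.val - df) with heIdxN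
  set grpOfN : ℕ → Fin a := fun t => if h : t / ND < a then ⟨t / ND, h⟩ else ⟨0, ha1⟩
    with hgrpOfN
  set ptOf : (ℕ → F) → Fin a → Fin D → F :=
    fun w i l => if l.val < df then fib i l else w (eIdxN (i, l)) with hptOf
  set φof : (ℕ → F) → (Fin a × Fin D) → ((Fin k → F) →ₗ[F] F) :=
    fun w e => φco r (c e.1) (ptOf w e.1 e.2) with hφof
  set Apts : Finset F := Finset.univ.biUnion A with hApts
  set Subs : Finset (Finset (Fin a × Fin D)) :=
    Finset.univ.powerset.filter (fun s => s.card ≤ k - 1) with hSubs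
  set pickv : (ℕ → F) → Finset (Fin a × Fin D) → Fin a → (Fin k → F) :=
    fun w s g =>
      if h : ∃ v, v ∈ (⨅ e ∈ s, LinearMap.ker (φof w e)) ∧ locpoly r (c g) v ≠ 0
      then h.choose else 0 with hpickv
  set badroots : (ℕ → F) → Finset (Fin a × Fin D) → Fin a → Finset F :=
    fun w s g => (locpoly r (c g) (pickv w s g)).roots.toFinset with hbadroots
  set Bad : ℕ → (ℕ → F) → Finset F :=
    fun t w => (Apts ∪ (Finset.range t).image w)
      ∪ Subs.biUnion (fun s => badroots w s (grpOfN t)) with hBad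
  set step : ℕ → (ℕ → F) → F :=
    fun t w => if h : ((Bad t w)ᶜ : Finset F).Nonempty then h.choose else 0 with hstep
  set W : ℕ → (ℕ → F) := fun t => Nat.rec (motive := fun _ => ℕ → F) (fun _ => 0)
      (fun t ih => Function.update ih t (step t ih)) t with hW
  have hWsucc : ∀ t, W (t+1) = Function.update (W t) t (step t (W t)) := fun t => rfl
  set wfin : ℕ → F := fun t => W (t+1) t with hwfin
  have hagree : ∀ T t, t < T → W T t = wfin t := by
    intro T
    induction T with
    | zero => omega
    | succ T ih =>
      intro t ht
      rcases Nat.lt_or_ge t T with h | h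
      · rw [hWsucc T, Function.update_of_ne (by omega)]
        exact ih t h
      · have ht2 : t = T := by omega
        subst ht2
        rfl
  -- cardinality of the bad set
  have hbadroots_card : ∀ w s g, (badroots w s g).card ≤ r := by
    intro w s g
    rw [hbadroots]
    by_cases h0 : locpoly r (c g) (pickv w s g) = 0
    · simp [h0]
    · calc (locpoly r (c g) (pickv w s g)).roots.toFinset.card
          ≤ Multiset.card (locpoly r (c g) (pickv w s g)).roots := Multiset.toFinset_card_le _
      _ ≤ (locpoly r (c g) (pickv w s g)).natDegree := Polynomial.card_roots' _
      _ ≤ r - 1 := locpoly_natDegree_le r _ _ hr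
      _ ≤ r := by omega
  have hBadcard : ∀ t w, t ≤ a * D → df < D → (Bad t w).card < Fintype.card F := by
    intro t w ht hdflt
    have h1 : Apts.card ≤ a * df := by
      calc Apts.card ≤ ∑ i, (A i).card := Finset.card_biUnion_le
      _ = a * df := by
          rw [Finset.sum_congr rfl (fun i _ => hA i), Finset.sum_const, Finset.card_univ]
          simp [Nat.smul_one_eq_cast]
    have h2 : ((Finset.range t).image w).card ≤ t :=
      le_trans Finset.card_image_le (by simp)
    have huniv : (Finset.univ : Finset (Fin a × Fin D)).card = a * D := by
      simp [Fintype.card_prod]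
    have h4 : Subs.card ≤ 2 * ((a*D).choose (k-1)) := by
      have hsub : Subs ⊆ (Finset.range k).biUnion
          (fun j => (Finset.univ : Finset (Fin a × Fin D)).powersetCard j) := by
        intro s hs
        rw [hSubs, Finset.mem_filter] at hs
        rw [Finset.mem_biUnion]
        refine ⟨s.card, ?_, ?_⟩
        · rw [Finset.mem_range]
          omega
        · rw [Finset.mem_powersetCard]
          exact ⟨Finset.mem_powerset.mp hs.1, rfl⟩
      calc Subs.card ≤ ((Finset.range k).biUnion
            (fun j => (Finset.univ : Finset (Fin a × Fin D)).powersetCard j)).card :=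
            Finset.card_le_card hsub
      _ ≤ ∑ j ∈ Finset.range k, ((Finset.univ : Finset (Fin a × Fin D)).powersetCard j).card :=
            Finset.card_biUnion_le
      _ = ∑ j ∈ Finset.range k, (a*D).choose j := by
            apply Finset.sum_congr rfl
            intro j _
            rw [Finset.card_powersetCard, huniv]
      _ ≤ 2 * ((a*D).choose (k-1)) := by
            have hk1 : k - 1 + 1 = k := by omega
            rw [← hk1]
            exact sum_choose_le (a*D) (k-1) (by have := h3k hdflt; omega)
    have h5 : (Subs.biUnion (fun s => badroots w s (grpOfN t))).card
        ≤ Subs.card * r := by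
      calc (Subs.biUnion (fun s => badroots w s (grpOfN t))).card
          ≤ ∑ s ∈ Subs, (badroots w s (grpOfN t)).card := Finset.card_biUnion_le
      _ ≤ ∑ _s ∈ Subs, r := Finset.sum_le_sum (fun s _ => hbadroots_card w s _)
      _ = Subs.card * r := by rw [Finset.sum_const, smul_eq_mul]
    have h6 : (Bad t w).card ≤ (Apts.card + ((Finset.range t).image w).card)
        + Subs.card * r := by
      calc (Bad t w).card ≤ (Apts ∪ (Finset.range t).image w).card
          + (Subs.biUnion (fun s => badroots w s (grpOfN t))).card := Finset.card_union_le _ _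
      _ ≤ _ := by
          have := Finset.card_union_le Apts ((Finset.range t).image w)
          omega
    have h7 : Subs.card * r ≤ 2 * ((a*D).choose (k-1)) * r := Nat.mul_le_mul_right _ h4
    have h8 := hHQ hdflt
    have h9 : a * df ≤ a * D := Nat.mul_le_mul_left _ hdfD
    omega
  -- goodness of chosen values
  have hstep_good : ∀ t, t < a * ND → wfin t ∉ Bad t (W t) := by
    intro t ht
    have hNDpos : 0 < ND := by
      by_contra h
      rw [not_lt] at h
      interval_cases ND
      omega
    have hdflt : df < D := by rw [hND] at hNDpos; omega
    have hta : t ≤ a * D := by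
      have : a * ND ≤ a * D := Nat.mul_le_mul_left _ (by omega)
      omega
    have hcard := hBadcard t (W t) hta hdflt
    have hne : ((Bad t (W t))ᶜ : Finset F).Nonempty := by
      rw [← Finset.card_pos, Finset.card_compl]
      have : (Finset.univ : Finset F).card = Fintype.card F := Finset.card_univ
      omega
    have hwt : wfin t = step t (W t) := by
      rw [hwfin]
      simp only [hWsucc t, Function.update_self]
    rw [hwt, hstep]
    simp only [dif_pos hne]
    have := hne.choose_spec
    rwa [Finset.mem_compl] at this
  -- extras are in range
  have heIdx_lt : ∀ (i : Fin a) (l : Fin D), df ≤ l.val → eIdxN (i, l) < a * ND := by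
    intro i l hl
    rw [heIdxN]
    simp only
    have h1 : l.val - df < ND := by
      have := l.isLt
      rw [hND]
      omega
    calc i.val * ND + (l.val - df) < i.val * ND + ND := by omega
    _ = (i.val + 1) * ND := by ring
    _ ≤ a * ND := Nat.mul_le_mul_right _ (by omega)
  have hext_notbad : ∀ (i : Fin a) (l : Fin D), df ≤ l.val →
      wfin (eIdxN (i, l)) ∉ Bad (eIdxN (i, l)) (W (eIdxN (i, l))) :=
    fun i l hl => hstep_good _ (heIdx_lt i l hl)
  -- eIdxN is monotone wrt eRank on extras, and group recovery
  have hgrp_eq : ∀ (i : Fin a) (l : Fin D), df ≤ l.val → grpOfN (eIdxN (i, l)) = i := by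
    intro i l hl
    have hNDpos : 0 < ND := by
      have := l.isLt
      rw [hND]
      omega
    have hdiv : eIdxN (i, l) / ND = i.val := by
      rw [heIdxN]
      simp only
      rw [Nat.mul_comm, Nat.mul_add_div hNDpos]
      have h1 : l.val - df < ND := by
        have := l.isLt
        rw [hND]
        omega
      rw [Nat.div_eq_of_lt h1]
      omega
    rw [hgrpOfN]
    simp only [hdiv, i.isLt, dif_pos]
  -- the point assignment
  set pt : Fin a → Fin D → F := ptOf wfin with hpt
  have hpt_fib : ∀ (i : Fin a) (l : Fin D), l.val < df → pt i l = fib i l := by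
    intro i l h
    rw [hpt, hptOf]
    simp only [if_pos h]
  have hpt_ext : ∀ (i : Fin a) (l : Fin D), df ≤ l.val → pt i l = wfin (eIdxN (i, l)) := by
    intro i l h
    rw [hpt, hptOf]
    simp only [if_neg (by omega : ¬ l.val < df)]
  have hptfib' : ∀ (i : Fin a) (l : Fin D), l.val < df → pt i l ∈ A i := by
    intro i l h
    rw [hpt_fib i l h]
    exact hfibA i l h
  have hptext' : ∀ (i : Fin a) (l : Fin D), df ≤ l.val → ∀ j, pt i l ∉ A j := by
    intro i l h j hmem
    apply hext_notbad i l h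
    rw [hBad]
    apply Finset.mem_union_left
    apply Finset.mem_union_left
    rw [hpt_ext i l h] at hmem
    rw [hApts]
    rw [Finset.mem_biUnion]
    exact ⟨j, Finset.mem_univ _, hmem⟩
  have hptinj' : ∀ i, Function.Injective (pt i) := by
    intro i l l' heq
    rcases Nat.lt_or_ge l.val df with h | h <;> rcases Nat.lt_or_ge l'.val df with h' | h'
    · exact hfibinj i l l' h h' (by rw [← hpt_fib i l h, ← hpt_fib i l' h', heq])
    · exfalso
      apply hptext' i l' h' i
      rw [← heq]
      exact hptfib' i l h
    · exfalso
      apply hptext' i l h i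
      rw [heq]
      exact hptfib' i l' h'
    · -- two extras
      by_contra hne
      have hidx_ne : eIdxN (i, l) ≠ eIdxN (i, l') := by
        intro hcon
        apply hne
        rw [heIdxN] at hcon
        simp only at hcon
        have hl1 : l.val - df = l'.val - df := by omega
        have : l.val = l'.val := by omega
        exact Fin.ext this
      rcases Nat.lt_or_ge (eIdxN (i, l)) (eIdxN (i, l')) with hlt | hge
      · apply hext_notbad i l' h'
        rw [hBad]
        apply Finset.mem_union_left
        apply Finset.mem_union_right
        rw [Finset.mem_image]
        refine ⟨eIdxN (i, l), Finset.mem_range.mpr hlt, ?_⟩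
        rw [hagree _ _ hlt]
        rw [hpt_ext i l h, hpt_ext i l' h'] at heq
        exact heq
      · have hlt : eIdxN (i, l') < eIdxN (i, l) := by omega
        apply hext_notbad i l h
        rw [hBad]
        apply Finset.mem_union_left
        apply Finset.mem_union_right
        rw [Finset.mem_image]
        refine ⟨eIdxN (i, l'), Finset.mem_range.mpr hlt, ?_⟩
        rw [hagree _ _ hlt]
        rw [hpt_ext i l h, hpt_ext i l' h'] at heq
        exact heq.symm
  -- build the code
  set S : Code F := ⟨r, k, mM, sS, df, D, a, f, c, A, pt, hr, hk, hm2, hs1, hsr, hma,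
    hfm, hfd, hdfr, hdfD, hcinj, hA, hAfib, hptinj', hptfib', hptext'⟩ with hS
  refine ⟨S, rfl, rfl, rfl, rfl, rfl, rfl, rfl, ?_⟩
  -- the GP property
  intro i l hl s hbefore hscard v hv hvloc
  set t := eIdxN (i, l) with htdef
  have htlt : t < a * ND := heIdx_lt i l hl
  -- functional agreement on s
  have hφagree : ∀ e ∈ s, S.φpt e = φof (W t) e := by
    intro e he
    have hφfin : S.φpt e = φof wfin e := rfl
    rw [hφfin]
    show φco r (c e.1) (ptOf wfin e.1 e.2) = φco r (c e.1) (ptOf (W t) e.1 e.2)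
    rcases Nat.lt_or_ge e.2.val df with hfib2 | hext
    · have h1 : ptOf wfin e.1 e.2 = fib e.1 e.2 := if_pos hfib2
      have h2 : ptOf (W t) e.1 e.2 = fib e.1 e.2 := if_pos hfib2
      rw [h1, h2]
    · have hrank : S.eRank e < S.eRank (i, l) := by
        rcases hbefore e he with h | h
        · exfalso
          have : e.2.val < df := h
          omega
        · exact h
      have hrank' : e.1.val * D + e.2.val < i.val * D + l.val := hrank
      have hel : e.2.val < D := e.2.isLt
      have hll : l.val < D := l.isLt
      have hidxlt : eIdxN (e.1, e.2) < t := by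
        have h0 : eIdxN (e.1, e.2) = e.1.val * ND + (e.2.val - df) := rfl
        have h1 : t = i.val * ND + (l.val - df) := rfl
        rw [h0, h1]
        rcases Nat.lt_trichotomy e.1.val i.val with hlt | heq | hgt
        · have a0 : e.2.val - df < ND := by rw [hND]; omega
          have a1 : e.1.val * ND + (e.2.val - df) < (e.1.val + 1) * ND := by
            have : (e.1.val + 1) * ND = e.1.val * ND + ND := by ring
            omega
          have a2 : (e.1.val + 1) * ND ≤ i.val * ND := Nat.mul_le_mul_right _ (by omega)
          omega
        · have a1 : e.1.val * D = i.val * D := by rw [heq]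
          have a2 : e.2.val < l.val := by omega
          have a3 : e.1.val * ND = i.val * ND := by rw [heq]
          omega
        · exfalso
          have a1 : i.val * D + D ≤ e.1.val * D := by
            have : i.val * D + D = (i.val + 1) * D := by ring
            rw [this]
            exact Nat.mul_le_mul_right _ (by omega)
          omega
      have h1 : ptOf wfin e.1 e.2 = wfin (eIdxN (e.1, e.2)) :=
        if_neg (by omega : ¬ e.2.val < df)
      have h2 : ptOf (W t) e.1 e.2 = (W t) (eIdxN (e.1, e.2)) :=
        if_neg (by omega : ¬ e.2.val < df)
      rw [h1, h2, hagree t (eIdxN (e.1, e.2)) hidxlt]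
  have hMeq : S.Mker s = (⨅ e ∈ s, LinearMap.ker (φof (W t) e)) := by
    rw [Code.Mker_def]
    exact biInf_ker_congr _ _ s hφagree
  have hgrp : grpOfN t = i := hgrp_eq i l hl
  have hex' : ∃ v', v' ∈ (⨅ e ∈ s, LinearMap.ker (φof (W t) e))
      ∧ locpoly r (c (grpOfN t)) v' ≠ 0 := by
    rw [hgrp]
    refine ⟨v, ?_, hvloc⟩
    rw [← hMeq]
    exact hv
  set v₀ := pickv (W t) s (grpOfN t) with hv₀
  have hv₀eq : v₀ = hex'.choose := by
    rw [hv₀, hpickv]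
    simp only
    rw [dif_pos hex']
  have hv₀spec := hex'.choose_spec
  rw [← hv₀eq] at hv₀spec
  have hSkk : S.k = k := rfl
  have hsmem : s ∈ Subs := by
    rw [hSubs, Finset.mem_filter]
    refine ⟨Finset.mem_powerset.mpr (fun e _ => Finset.mem_univ e), by
      rw [hSkk] at hscard
      omega⟩
  have hnotroot : wfin t ∉ badroots (W t) s (grpOfN t) := by
    intro hmem
    apply hext_notbad i l hl
    rw [hBad]
    apply Finset.mem_union_right
    rw [Finset.mem_biUnion]
    exact ⟨s, hsmem, hmem⟩
  have hne0 : locpoly r (c (grpOfN t)) v₀ ≠ 0 := hv₀spec.2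
  refine ⟨v₀, ?_, ?_⟩
  · rw [hMeq]
    exact hv₀spec.1
  · have hptval : S.pt i l = wfin t := hpt_ext i l hl
    show (locpoly S.r (S.c i) v₀).eval (S.pt i l) ≠ 0
    have hSr : S.r = r := rfl
    have hSc : S.c i = c i := rfl
    rw [hSr, hSc, hptval]
    intro heval
    apply hnotroot
    rw [hbadroots]
    rw [Multiset.mem_toFinset, mem_roots hne0]
    rw [hgrp]
    exact heval






def IsLinearLRC' (F : Type) [Field F] [Fintype F] [DecidableEq F]
    (n k d r δ : ℕ) : Prop :=
  ∃ C : Submodule F (Fin n → F),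
    Module.finrank F ↥C = k ∧
    (∀ c ∈ C, c ≠ 0 → d ≤ hammingNorm c) ∧
    (∃ c ∈ C, c ≠ 0 ∧ hammingNorm c = d) ∧
    (∀ j : Fin n, ∃ S : Finset (Fin n), j ∈ S ∧ S.card ≤ r + δ - 1 ∧
      ∀ c ∈ C, ∀ c' ∈ C, (∃ i ∈ S, c i ≠ c' i) →
        δ ≤ (S.filter (fun i => c i ≠ c' i)).card)

namespace Code

variable {F : Type} [Field F] [Fintype F] [DecidableEq F] (S : Code F)

lemma isLRC (hGP : S.GP) (n d : ℕ) (hn : n = S.a * S.D)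
    (hd : d + ((S.mM - 1) * (S.D - S.r) + (S.k - 1)) = n) (hd1 : 1 ≤ d) :
    IsLinearLRC' F n S.k d S.r (S.D - S.r + 1) := by
  classical
  set E : Fin n ≃ (Fin S.a × Fin S.D) := (finCongr hn).trans finProdFinEquiv.symm
    with hE
  set gmap : (Fin S.k → F) →ₗ[F] (Fin n → F) :=
    (LinearMap.funLeft F F (fun j : Fin n => E j)).comp
      (LinearMap.pi (fun e : Fin S.a × Fin S.D => S.φpt e)) with hgmap
  have hgmap_apply : ∀ v (j : Fin n), gmap v j = S.φpt (E j) v := by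
    intro v j
    rw [hgmap]
    rfl
  -- zero counting transport
  have hcount : ∀ (v : Fin S.k → F),
      ((Finset.univ : Finset (Fin n)).filter (fun j => gmap v j = 0)).card
        = ((Finset.univ : Finset (Fin S.a × Fin S.D)).filter
            (fun e => S.φpt e v = 0)).card := by
    intro v
    apply Finset.card_equiv E
    intro j
    simp only [Finset.mem_filter, Finset.mem_univ, true_and]
    rw [hgmap_apply]
  have hnorm : ∀ (v : Fin S.k → F), hammingNorm (gmap v)
      + ((Finset.univ : Finset (Fin n)).filter (fun j => gmap v j = 0)).card = n := by
    intro v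
    have h1 := Finset.card_filter_add_card_filter_not
      (s := (Finset.univ : Finset (Fin n))) (fun j => gmap v j = 0)
    rw [Finset.card_univ, Fintype.card_fin] at h1
    have h2 : hammingNorm (gmap v)
        = ((Finset.univ : Finset (Fin n)).filter (fun j => ¬ gmap v j = 0)).card := rfl
    omega
  -- distance bound for all nonzero codewords
  have hTn : S.k + (S.mM - 1) * (S.D - S.r) ≤ n := by omega
  have hdist : ∀ v : Fin S.k → F, v ≠ 0 → d ≤ hammingNorm (gmap v) := by
    intro v hv
    have h1 := S.zeros_le hGP v hv
    have h2 := hcount v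
    have h3 := hnorm v
    omega
  have hinj : Function.Injective gmap := by
    intro v v' hvv
    by_contra hne
    have hsub : v - v' ≠ 0 := fun h => hne (by rwa [sub_eq_zero] at h)
    have h1 := hdist (v - v') hsub
    have h2 : gmap (v - v') = 0 := by
      rw [map_sub, hvv, sub_self]
    rw [h2, hammingNorm_zero] at h1
    omega
  refine ⟨LinearMap.range gmap, ?_, ?_, ?_, ?_⟩
  · rw [LinearMap.finrank_range_of_inj hinj, Module.finrank_pi, Fintype.card_fin]
  · rintro w ⟨v, rfl⟩ hw0
    apply hdist
    intro h0
    apply hw0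
    rw [h0, map_zero]
  · obtain ⟨v, hv0, hvcard⟩ := S.exists_exact_word
    refine ⟨gmap v, ⟨v, rfl⟩, ?_, ?_⟩
    · intro h0
      apply hv0
      exact hinj (by rw [h0, map_zero])
    · have h2 := hcount v
      have h3 := hnorm v
      have h4 : (S.k - 1) + (S.mM - 1) * (S.D - S.r) = (S.mM - 1) * S.D + (S.sS - 1) := by
        have e1 : (S.mM - 1) * S.r + (S.mM - 1) * (S.D - S.r) = (S.mM - 1) * S.D := by
          rw [← Nat.mul_add]
          congr 1
          have h5 : S.r < S.D := lt_of_lt_of_le S.hdfr S.hdfD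
          omega
        have e2 := S.hk
        have e3 := S.hs1
        omega
      omega
  · intro j
    set i := (E j).1 with hi
    set Sset := (Finset.univ : Finset (Fin n)).filter (fun j' => (E j').1 = i) with hSset
    have hmemS : j ∈ Sset := by
      rw [hSset, Finset.mem_filter]
      exact ⟨Finset.mem_univ _, rfl⟩
    have hScard : Sset.card = S.D := by
      have h1 : Sset.card = ((Finset.univ : Finset (Fin S.a × Fin S.D)).filter
          (fun e => e.1 = i)).card := by
        apply Finset.card_equiv E
        intro j'
        simp only [hSset, Finset.mem_filter, Finset.mem_univ, true_and]
      rw [h1]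
      have h2 : ((Finset.univ : Finset (Fin S.a × Fin S.D)).filter (fun e => e.1 = i))
          = {i} ×ˢ (Finset.univ : Finset (Fin S.D)) := by
        ext e
        simp only [Finset.mem_filter, Finset.mem_univ, true_and, Finset.mem_product,
          Finset.mem_singleton, and_true]
      rw [h2, Finset.card_product, Finset.card_singleton, Finset.card_univ,
        Fintype.card_fin, one_mul]
    refine ⟨Sset, hmemS, ?_, ?_⟩
    · have hrD : S.r ≤ S.D := le_trans (le_of_lt S.hdfr) S.hdfD
      rw [hScard]
      omega
    · rintro w ⟨v, rfl⟩ w' ⟨v', rfl⟩ ⟨j', hj'S, hj'ne⟩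
      have hj'i : (E j').1 = i := (Finset.mem_filter.mp hj'S).2
      have hDelta : ∃ l : Fin S.D, S.φpt (i, l) v ≠ S.φpt (i, l) v' := by
        refine ⟨(E j').2, ?_⟩
        have heta : ((i : Fin S.a), (E j').2) = E j' := by
          rw [← hj'i]
        rw [heta]
        rw [hgmap_apply, hgmap_apply] at hj'ne
        exact hj'ne
      have hloc := S.locality i v v' hDelta
      have hcard2 : (Sset.filter (fun j' => gmap v j' ≠ gmap v' j')).card
          = ((Finset.univ : Finset (Fin S.D)).filter
              (fun l => S.φpt (i, l) v ≠ S.φpt (i, l) v')).card := by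
        have h1 : (Sset.filter (fun j' => gmap v j' ≠ gmap v' j')).card
            = ((Finset.univ : Finset (Fin S.a × Fin S.D)).filter
                (fun e => e.1 = i ∧ S.φpt e v ≠ S.φpt e v')).card := by
          apply Finset.card_equiv E
          intro j'
          simp only [hSset, Finset.mem_filter, Finset.mem_univ, true_and, and_assoc]
          rw [hgmap_apply, hgmap_apply]
        rw [h1]
        apply Finset.card_bij (fun e _ => e.2)
        · intro e he
          rw [Finset.mem_filter] at he ⊢
          refine ⟨Finset.mem_univ _, ?_⟩
          have h2 : ((i : Fin S.a), e.2) = e := by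
            have h3 := he.2.1
            rw [← h3]
          rw [h2]
          exact he.2.2
        · intro e he e' he' hee
          rw [Finset.mem_filter] at he he'
          have h2 : e = (i, e.2) := by rw [← he.2.1]
          have h3 : e' = (i, e'.2) := by rw [← he'.2.1]
          rw [h2, h3, hee]
        · intro l hl
          rw [Finset.mem_filter] at hl
          refine ⟨(i, l), ?_, rfl⟩
          rw [Finset.mem_filter]
          exact ⟨Finset.mem_univ _, rfl, hl.2⟩
      rw [hcard2]
      have hrD : S.r ≤ S.D := le_trans (le_of_lt S.hdfr) S.hdfD
      have hr1 := S.hr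
      omega

end Code






lemma pigeonhole_cond (q df a : ℕ) (hdf : 2 ≤ df) (h1 : 2*df*df ≤ q)
    (h2 : 2 * df.factorial * a < q) : a * q^(df-1) < q.choose df := by
  have h3 := choose_lower q df hdf h1
  have hq0 : 0 < q := by nlinarith
  have hp0 : 0 < q^(df-1) := Nat.pow_pos hq0
  have h4 : (2 * df.factorial * a) * q^(df-1) < q * q^(df-1) :=
    Nat.mul_lt_mul_of_lt_of_le h2 (le_refl _) hp0
  have h5 : q * q^(df-1) = q ^ df := by
    rw [← pow_succ']
    congr 1
    omega
  have h7 : (a * q^(df-1)) * (2 * df.factorial) < (q.choose df) * (2*df.factorial) := by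
    calc (a * q^(df-1)) * (2*df.factorial) = (2*df.factorial*a) * q^(df-1) := by ring
    _ < q * q^(df-1) := h4
    _ = q ^ df := h5
    _ ≤ 2 * (df.factorial * q.choose df) := h3
    _ = (q.choose df) * (2*df.factorial) := by ring
  exact Nat.lt_of_mul_lt_mul_right h7

lemma mdiv_facts (r k : ℕ) (hr : 1 ≤ r) (hrk : r < k) :
    (((k + r - 1) / r) - 1) * r < k ∧ k ≤ ((k + r - 1) / r) * r ∧ 2 ≤ (k + r - 1) / r := by
  obtain ⟨mM, hmM⟩ : ∃ m, (k + r - 1)/r = m := ⟨_, rfl⟩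
  rw [hmM]
  obtain ⟨u, hu1, hu2⟩ : ∃ u, mM * r + u = k + r - 1 ∧ u < r := by
    refine ⟨(k + r - 1) % r, ?_, Nat.mod_lt _ (by omega)⟩
    rw [← hmM]
    exact Nat.div_add_mod' _ _
  clear hmM
  obtain ⟨P, hP⟩ : ∃ P, mM * r = P := ⟨_, rfl⟩
  obtain ⟨Q, hQ⟩ : ∃ Q, (mM - 1) * r = Q := ⟨_, rfl⟩
  rw [hP] at hu1
  have hge : k ≤ P := by omega
  have hm1 : 1 ≤ mM := by
    by_contra h
    have h0 : mM = 0 := by omega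
    rw [h0, Nat.zero_mul] at hP
    omega
  have hmul : Q + r = P := by
    rw [← hP, ← hQ]
    have h2 : (mM - 1) + 1 = mM := by omega
    calc (mM-1)*r + r = ((mM-1)+1)*r := by ring
    _ = mM * r := by rw [h2]
  have hm2 : 2 ≤ mM := by
    by_contra h
    have h1 : mM = 1 := by omega
    rw [h1, one_mul] at hP
    omega
  refine ⟨?_, ?_, hm2⟩
  · rw [hQ]
    omega
  · rw [hP]
    omega

lemma master_arith (r δ a k n q df : ℕ)
    (hδ : 2 ≤ δ) (hr : 1 ≤ r) (ha : 1 ≤ a)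
    (hn : n = a * (r + δ - 1)) (hrk : r < k) (hkar : k ≤ a * r)
    (hq : (r * δ) ^ (r * 4 ^ r) * ((n + (r * δ) ^ ((r - 1) * 4 ^ r)).choose (k - 1)) < q)
    (hdf : (3 * k ≤ n ∧ df = r + 1) ∨ (n < 3 * k ∧ df = r + δ - 1)) :
    2*df*df ≤ q ∧ 2*df.factorial*a < q ∧ (2*n + 2*(n.choose (k-1))*r < q) := by
  set D := r + δ - 1 with hD
  set X := (r*δ)^((r-1)*4^r) with hX
  set Y := (r*δ)^(4^r) with hY
  have hYpow : (r*δ)^(r*4^r) = Y^r := by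
    rw [hY, ← pow_mul]
    congr 1
    exact Nat.mul_comm _ _
  have hrD : r < D := by omega
  have hkn : k ≤ n := by
    have h1 : a * r ≤ a * D := Nat.mul_le_mul_left _ (by omega)
    omega
  have hk2 : 2 ≤ k := by omega
  have hn2a : 2 * a ≤ n := by
    have h1 : a * 2 ≤ a * D := Nat.mul_le_mul_left _ (by omega)
    omega
  have hn2 : 2 ≤ n := by omega
  have hCge : n + X ≤ (n + X).choose (k-1) := le_choose _ _ (by omega) (by omega)
  have hCmono : n.choose (k-1) ≤ (n + X).choose (k-1) := Nat.choose_le_choose _ (by omega)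
  have hqB : Y^r * ((n + X).choose (k-1)) < q := by
    rw [← hYpow]
    exact hq
  have hB1 : Y^r * n < q := by
    calc Y^r * n ≤ Y^r * (n + X) := Nat.mul_le_mul_left _ (by omega)
    _ ≤ Y^r * ((n + X).choose (k-1)) := Nat.mul_le_mul_left _ hCge
    _ < q := hqB
  have hB2 : Y^r * (n.choose (k-1)) < q :=
    lt_of_le_of_lt (Nat.mul_le_mul_left _ hCmono) hqB
  have h2r : 2 * r ≤ r * δ := by
    calc 2*r = r*2 := by ring
    _ ≤ r*δ := Nat.mul_le_mul_left _ hδ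
  have hY2r : (2*r)^(4^r) ≤ Y := Nat.pow_le_pow_left h2r _
  have h44 : 4 ≤ 4^r := by
    calc 4 = 4^1 := by norm_num
    _ ≤ 4^r := Nat.pow_le_pow_right (by omega) hr
  have hY4 : (2*r)^4 ≤ Y := le_trans (Nat.pow_le_pow_right (by omega) h44) hY2r
  have hYr4 : (2*r)^4 ≤ Y^r := le_trans hY4 (Nat.le_self_pow (by omega) _)
  have hrr : r ≤ r * r := Nat.le_mul_of_pos_left r (by omega)
  have hnC : n ≤ n.choose (k-1) := le_choose n (k-1) (by omega) (by omega)
  have hc : 2*n + 2*(n.choose (k-1))*r < q := by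
    have h1 : 2*n + 2*(n.choose (k-1))*r ≤ (2 + 2*r) * (n.choose (k-1)) := by
      have h2 : 2*n ≤ 2*(n.choose (k-1)) := by omega
      calc 2*n + 2*(n.choose (k-1))*r ≤ 2*(n.choose (k-1)) + 2*(n.choose (k-1))*r := by omega
      _ = (2 + 2*r) * (n.choose (k-1)) := by ring
    have h2 : 2 + 2*r ≤ (2*r)^4 := by
      have h3 : (2*r)^4 = 16*(r*r*(r*r)) := by ring
      have h4 : r ≤ r*r*(r*r) := by
        calc r ≤ r * r := hrr
        _ ≤ (r*r) * (r*r) := Nat.le_mul_of_pos_right _ (by positivity)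
        _ = r*r*(r*r) := by ring
      omega
    calc 2*n + 2*(n.choose (k-1))*r ≤ (2 + 2*r) * (n.choose (k-1)) := h1
    _ ≤ (2*r)^4 * (n.choose (k-1)) := Nat.mul_le_mul_right _ h2
    _ ≤ Y^r * (n.choose (k-1)) := Nat.mul_le_mul_right _ hYr4
    _ < q := hB2
  have hkey : 2*df*df ≤ Y^r * n ∧ 2*df.factorial*a ≤ Y^r * n := by
    rcases Nat.lt_or_ge r 2 with hr1 | hr2
    · -- r = 1
      have hreq : r = 1 := by omega
      have hdfeq : df = 2 := by
        rcases hdf with ⟨h3, h4⟩ | ⟨h3, h4⟩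
        · omega
        · have hδ3 : δ < 3 := by
            by_contra hc3
            rw [not_lt] at hc3
            have h5 : a * 3 ≤ a * D := Nat.mul_le_mul_left _ (by omega)
            have h6 : k ≤ a := by
              rw [hreq] at hkar
              omega
            omega
          omega
      have h216 : (2*r)^4 = 16 := by rw [hreq]; norm_num
      have hY16 : 16 ≤ Y^r := by omega
      have hfac : df.factorial = 2 := by rw [hdfeq]; rfl
      constructor
      · have h7 : 16 * 2 ≤ Y^r * n := Nat.mul_le_mul hY16 hn2
        rw [hdfeq]
        omega
      · have h7 : 16 * (2*a) ≤ Y^r * n := Nat.mul_le_mul hY16 hn2a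
        rw [hfac]
        omega
    · -- r ≥ 2
      have hdf_le : df ≤ 3*r := by
        rcases hdf with ⟨h3, h4⟩ | ⟨h3, h4⟩
        · omega
        · have h5 : a * D < a * (3*r) := by
            have h6 : 3 * k ≤ 3 * (a * r) := by omega
            have h7 : 3 * (a*r) = a * (3*r) := by ring
            omega
          have h8 : D < 3*r := lt_of_mul_lt_mul_left h5 (Nat.zero_le a)
          omega
      have h16 : 16 ≤ 4^r := by
        calc (16:ℕ) = 4^2 := by norm_num
        _ ≤ 4^r := Nat.pow_le_pow_right (by omega) hr2
      have hY16r : (2*r)^(16*r) ≤ Y^r := by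
        have h1 : (2*r)^16 ≤ Y := le_trans (Nat.pow_le_pow_right (by omega) h16) hY2r
        calc (2*r)^(16*r) = ((2*r)^16)^r := by rw [← pow_mul]
        _ ≤ Y^r := Nat.pow_le_pow_left h1 r
      have hYrn : Y^r ≤ Y^r * n := Nat.le_mul_of_pos_right _ (by omega)
      constructor
      · have h1 : 2*df*df ≤ 2*(3*r)*(3*r) :=
          Nat.mul_le_mul (Nat.mul_le_mul_left 2 hdf_le) hdf_le
        have h2 : 2*(3*r)*(3*r) = 18*(r*r) := by ring
        have h5 : 4 ≤ r*r := Nat.mul_le_mul hr2 hr2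
        have h3 : 18*(r*r) ≤ 16*(r*r*(r*r)) := by
          calc 18*(r*r) ≤ 16*((r*r)*4) := by omega
          _ ≤ 16*((r*r)*(r*r)) := by
              apply Nat.mul_le_mul_left
              exact Nat.mul_le_mul_left _ h5
          _ = 16*(r*r*(r*r)) := by ring
        have h6 : 16*(r*r*(r*r)) = (2*r)^4 := by ring
        have h7 : (2*r)^4 ≤ (2*r)^(16*r) := Nat.pow_le_pow_right (by omega) (by omega)
        omega
      · have hs1 : df.factorial ≤ df^df := Nat.factorial_le_pow df
        have hs2 : df^df ≤ (3*r)^df := Nat.pow_le_pow_left hdf_le df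
        have hs3 : (3*r)^df ≤ (3*r)^(3*r) := Nat.pow_le_pow_right (by omega) hdf_le
        have hs4 : (3*r)^(3*r) ≤ ((2*r)^2)^(3*r) := by
          apply Nat.pow_le_pow_left
          have h5 : (2*r)^2 = 4*(r*r) := by ring
          have h6 : 3*r ≤ 3*(r*r) := Nat.mul_le_mul_left 3 hrr
          omega
        have hs5 : ((2*r)^2)^(3*r) = (2*r)^(6*r) := by
          rw [← pow_mul]
          congr 1
          ring
        have hs6 : 2 * (2*r)^(6*r) ≤ (2*r)^(6*r+1) := by
          have h5 : (2*r)^(6*r+1) = (2*r)^(6*r) * (2*r) := pow_succ _ _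
          have h6 : (2*r)^(6*r) * 2 ≤ (2*r)^(6*r) * (2*r) :=
            Nat.mul_le_mul_left _ (by omega)
          omega
        have hs7 : (2*r)^(6*r+1) ≤ (2*r)^(16*r) := Nat.pow_le_pow_right (by omega) (by omega)
        have hs8 : 2*df.factorial*a ≤ (2*r)^(16*r) * a := by
          apply Nat.mul_le_mul_right
          omega
        have hs9 : (2*r)^(16*r)*a ≤ Y^r * a := Nat.mul_le_mul_right _ hY16r
        have hs10 : Y^r * a ≤ Y^r * n := Nat.mul_le_mul_left _ (by omega)
        omega
  obtain ⟨hA, hBb⟩ := hkey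
  exact ⟨by omega, by omega, hc⟩

lemma main_construct (F : Type) [Field F] [Fintype F] [DecidableEq F]
    (r k mM sS df D a n : ℕ)
    (hr : 1 ≤ r) (hk : k = (mM-1)*r + sS) (hm2 : 2 ≤ mM) (hs1 : 1 ≤ sS) (hsr : sS ≤ r)
    (hma : mM ≤ a) (hdfr : r < df) (hdf2 : 2 ≤ df) (hdfD : df ≤ D)
    (hn : n = a * D)
    (hq1 : 2*df*df ≤ Fintype.card F) (hq2 : 2*df.factorial*a < Fintype.card F)
    (hq3 : df < D → 2*n + 2*(n.choose (k-1))*r < Fintype.card F)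
    (h3k : df < D → 3 * k ≤ n)
    (d : ℕ) (hd : d + ((mM - 1) * (D - r) + (k - 1)) = n) (hd1 : 1 ≤ d) :
    IsLinearLRC' F n k d r (D - r + 1) := by
  have ha1 : 1 ≤ a := by omega
  obtain ⟨f, c, A, hfm, hfd, hcinj, hA, hAfib⟩ := good_poly df a hdf2 ha1
    (pigeonhole_cond _ df a hdf2 hq1 hq2)
  obtain ⟨S, hSr, hSk, hSm, hSs, hSdf, hSD, hSa, hGP⟩ :=
    exists_code F r k mM sS df D a f c A hr hk hm2 hs1 hsr hma hfm hfd hdfr hdfD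
      hcinj hA hAfib
      (fun h => by rw [← hn]; exact h3k h)
      (fun h => by
        have := hq3 h
        rw [hn] at this
        exact this)
  have hres := S.isLRC hGP n d
    (by rw [hSa, hSD]; exact hn)
    (by rw [hSm, hSD, hSr, hSk]; exact hd) hd1
  rw [hSk, hSr, hSD] at hres
  exact hres

lemma final_main (F : Type) [Field F] [Fintype F] [DecidableEq F]
    (n k r δ a : ℕ) (hδ : 2 ≤ δ) (hr : 1 ≤ r) (ha : 1 ≤ a)
    (hn : n = a * (r + δ - 1))
    (hrk : r < k) (hkn : k ≤ n - a * (δ - 1))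
    (hq : (r * δ) ^ (r * 4 ^ r) *
        Nat.choose (n + (r * δ) ^ ((r - 1) * 4 ^ r)) (k - 1) < Fintype.card F) :
    ∃ d : ℕ, IsLinearLRC' F n k d r δ
      ∧ d + ((((k + r - 1)/r) - 1) * (δ - 1) + (k - 1)) = n := by
  classical
  have hkar : k ≤ a * r := by
    have h1 : a * (r + δ - 1) = a * r + a * (δ - 1) := by
      rw [← Nat.mul_add]
      congr 1
      omega
    omega
  set D := r + δ - 1 with hDdef
  have hnD : n = a * D := hn
  obtain ⟨hmlt, hmge, hm2'⟩ := mdiv_facts r k hr hrk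
  set mM := (k + r - 1) / r with hmM
  set sS := k - (mM - 1) * r with hsS
  have hk_eq : k = (mM - 1) * r + sS := by omega
  have hs1 : 1 ≤ sS := by omega
  have hmul0 : (mM - 1) * r + r = mM * r := by
    have h2 : (mM - 1) + 1 = mM := by omega
    calc (mM-1)*r + r = ((mM-1)+1)*r := by ring
    _ = mM * r := by rw [h2]
  have hsr : sS ≤ r := by omega
  have hma : mM ≤ a := by
    by_contra hcon
    have h1 : a ≤ mM - 1 := by omega
    have h2 : a * r ≤ (mM-1)*r := Nat.mul_le_mul_right _ h1
    omega
  have hmulA : (mM-1)*(δ-1) + (mM-1)*r = (mM-1)*D := by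
    rw [← Nat.mul_add]
    congr 1
    omega
  have hmulB : (mM-1)*D ≤ (a-1)*D := Nat.mul_le_mul_right _ (by omega)
  have hmulC : (a-1)*D + D = a*D := by
    have h2 : (a-1)+1 = a := by omega
    calc (a-1)*D + D = ((a-1)+1)*D := by ring
    _ = a*D := by rw [h2]
  have hrD : r < D := by omega
  have hT1n : (mM - 1)*(δ-1) + (k-1) + 1 ≤ n := by omega
  set d := n - ((mM - 1)*(δ-1) + (k-1)) with hd_def
  have hd_eq : d + ((mM - 1) * (D - r) + (k - 1)) = n := by
    have h2 : D - r = δ - 1 := by omega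
    rw [h2]
    omega
  have hd1 : 1 ≤ d := by omega
  have hδD : D - r + 1 = δ := by omega
  by_cases h3k : 3 * k ≤ n
  · obtain ⟨hq1, hq2, hq3⟩ := master_arith r δ a k n (Fintype.card F) (r+1)
      hδ hr ha hn hrk hkar hq (Or.inl ⟨h3k, rfl⟩)
    have hlrc := main_construct F r k mM sS (r+1) D a n hr hk_eq hm2' hs1 hsr hma
      (by omega) (by omega) (by omega) hnD hq1 hq2 (fun _ => hq3) (fun _ => h3k)
      d hd_eq hd1
    rw [hδD] at hlrc
    exact ⟨d, hlrc, by omega⟩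
  · obtain ⟨hq1, hq2, hq3⟩ := master_arith r δ a k n (Fintype.card F) D
      hδ hr ha hn hrk hkar hq (Or.inr ⟨by omega, rfl⟩)
    have hlrc := main_construct F r k mM sS D D a n hr hk_eq hm2' hs1 hsr hma
      (by omega) (by omega) (le_refl D) hnD hq1 hq2
      (fun h => absurd h (lt_irrefl D)) (fun h => absurd h (lt_irrefl D))
      d hd_eq hd1
    rw [hδD] at hlrc
    exact ⟨d, hlrc, by omega⟩



end LRC7

/-- A linear locally repairable code (LRC) over a finite field `F` with parameters
`(n, k, d, r, δ)`: a `k`-dimensional subspace `C ⊆ F^n` whose minimum Hamming distance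
is exactly `d`, such that every coordinate `j` has a repair set `S` with `j ∈ S`,
`|S| ≤ r + δ - 1`, and the projection of `C` to the coordinates in `S` has minimum
Hamming distance at least `δ`. -/
def IsLinearLRC (F : Type) [Field F] [Fintype F] [DecidableEq F]
    (n k d r δ : ℕ) : Prop :=
  ∃ C : Submodule F (Fin n → F),
    Module.finrank F ↥C = k ∧
    (∀ c ∈ C, c ≠ 0 → d ≤ hammingNorm c) ∧
    (∃ c ∈ C, c ≠ 0 ∧ hammingNorm c = d) ∧
    (∀ j : Fin n, ∃ S : Finset (Fin n), j ∈ S ∧ S.card ≤ r + δ - 1 ∧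
      ∀ c ∈ C, ∀ c' ∈ C, (∃ i ∈ S, c i ≠ c' i) →
        δ ≤ (S.filter (fun i => c i ≠ c' i)).card)

/-- The Singleton-type bound `d_opt(n,k,r,δ) = n - k - (⌈k/r⌉ - 1)(δ - 1) + 1`,
computed in `ℤ`, where `⌈k/r⌉ = (k + r - 1) / r`. -/
def doptZ (n k r δ : ℕ) : ℤ :=
  (n : ℤ) - k - ((((k + r - 1) / r : ℕ) : ℤ) - 1) * ((δ : ℤ) - 1) + 1


theorem stmt_7 (F : Type) [Field F] [Fintype F] [DecidableEq F]
    (n k r δ a : ℕ) (hδ : 2 ≤ δ) (hr : 1 ≤ r) (ha : 1 ≤ a)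
    (hn : n = a * (r + δ - 1))
    (hrk : r < k) (hkn : k ≤ n - a * (δ - 1))
    (hq : (r * δ) ^ (r * 4 ^ r) *
        Nat.choose (n + (r * δ) ^ ((r - 1) * 4 ^ r)) (k - 1) < Fintype.card F) :
    ∃ d : ℕ, IsLinearLRC F n k d r δ ∧ (d : ℤ) = doptZ n k r δ := by
  obtain ⟨d, hlrc, hsum⟩ := LRC7.final_main F n k r δ a hδ hr ha hn hrk hkn hq
  refine ⟨d, hlrc, ?_⟩
  set mM := (k + r - 1) / r with hmM
  obtain ⟨Z, hZ⟩ : ∃ Z, (mM - 1) * (δ - 1) = Z := ⟨_, rfl⟩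
  rw [hZ] at hsum
  have hm1 : 1 ≤ mM := by
    rw [hmM, Nat.one_le_div_iff (by omega : 0 < r)]
    omega
  have h1 : ((mM - 1 : ℕ) : ℤ) = (mM:ℤ) - 1 := by
    push_cast [Nat.cast_sub hm1]
    ring
  have h2 : ((δ - 1 : ℕ) : ℤ) = (δ:ℤ) - 1 := by
    push_cast [Nat.cast_sub (show 1 ≤ δ by omega)]
    ring
  have hcast : ((mM:ℤ) - 1) * ((δ:ℤ) - 1) = (Z:ℤ) := by
    rw [← hZ, Nat.cast_mul, h1, h2]
  unfold doptZ
  rw [← hmM, hcast]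
  have hk1 : 1 ≤ k := by omega
  omega
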